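/- arXiv:1804.08547 — 9 statements merged into one kernel-verified Lean document; each statement's English description precedes it below -/
import Mathlib

section
/- Let S be a string with parsing Y_S = y₁y₂…y_c (each yᵢ nonempty, concatenation equals S) and let L = |y₁|,|y₂|,…,|y_c| be the word of phrase lengths. Then |Y_S|·H₀(Y_S) ≤ C(Y_S) + |L|·H₀(L), where C(Y_S) = ∑ᵢ -log 𝒫(yᵢ) is the parsing cost and H₀ denotes the zero-order empirical entropy (of Y_S viewed as a word over the set of distinct phrases, and of L viewed as a word over {1,…,|S|}). -/
open Finset

/-- Unnormalized zero-order empirical entropy `|w| * H₀(w)` (logs base 2). -/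
noncomputable def nH0 {α : Type*} [DecidableEq α] (w : List α) : ℝ :=
  -∑ a ∈ w.toFinset, (w.count a : ℝ) * Real.logb 2 ((w.count a : ℝ) / (w.length : ℝ))

/-- Number of (possibly overlapping) occurrences of `v` as a substring of `S`,
with the convention `|S|_ε = |S|`. -/
def occ {α : Type*} [DecidableEq α] (S v : List α) : ℕ :=
  if v = [] then S.length
  else ((List.range S.length).filter (fun i => (S.drop i).take v.length = v)).length

/-- The phrase probability `𝒫(y) = ∏_{j=1}^{|y|} |S|_{y[1..j]} / |S|_{y[1..j-1]}`. -/
noncomputable def phraseProb {α : Type*} [DecidableEq α] (S y : List α) : ℝ :=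
  ∏ j ∈ Finset.range y.length,
    ((occ S (y.take (j + 1)) : ℝ) / (occ S (y.take j) : ℝ))

/-- The phrase cost `C(y) = -log 𝒫(y)`. -/
noncomputable def phraseCost {α : Type*} [DecidableEq α] (S y : List α) : ℝ :=
  -Real.logb 2 (phraseProb S y)

/-- The parsing cost `C(Y_S) = ∑ᵢ C(yᵢ)`. -/
noncomputable def parseCost {α : Type*} [DecidableEq α] (S : List α) (Y : List (List α)) : ℝ :=
  (Y.map (phraseCost S)).sum

/-! ### Auxiliary lemmas -/

lemma occ_card' {α : Type*} [DecidableEq α] (S v : List α) (hv : v ≠ []) :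
    occ S v = ((Finset.range S.length).filter
      (fun i => (S.drop i).take v.length = v)).card := by
  rw [occ, if_neg hv]
  rfl

lemma occ_pos' {α : Type*} [DecidableEq α] {S v : List α} (hS : S ≠ []) (hv : v <:+: S) :
    0 < occ S v := by
  rcases eq_or_ne v [] with rfl | hne
  · simpa [occ] using List.length_pos_iff.mpr hS
  · obtain ⟨s, t, hst⟩ := hv
    rw [occ, if_neg hne, List.length_pos_iff]
    have hmem : s.length ∈ (List.range S.length).filter
        (fun i => (S.drop i).take v.length = v) := by
      rw [List.mem_filter]
      constructor
      · rw [List.mem_range, ← hst]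
        simp [List.length_append]
        have : 0 < v.length := List.length_pos_iff.mpr hne
        omega
      · have : S.drop s.length = v ++ t := by
          rw [← hst, List.append_assoc, List.drop_left]
        rw [this, List.take_left]
        simp
    intro h
    rw [h] at hmem
    exact absurd hmem List.not_mem_nil

lemma occ_take_pos' {α : Type*} [DecidableEq α] {S v : List α} (hS : S ≠ [])
    (hv : v <:+: S) (j : ℕ) : 0 < occ S (v.take j) :=
  occ_pos' hS (((List.take_prefix j v).isInfix).trans hv)

lemma prod_telescope' {g : ℕ → ℝ} (hg : ∀ j, g j ≠ 0) (m : ℕ) :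
    ∏ j ∈ Finset.range m, (g (j + 1) / g j) = g m / g 0 := by
  induction m with
  | zero => simp [div_self (hg 0)]
  | succ m ih =>
    rw [Finset.prod_range_succ, ih, div_mul_div_comm]
    rw [mul_comm (g m) (g (m+1)), mul_div_mul_right _ _ (hg m)]

lemma phraseProb_eq' {α : Type*} [DecidableEq α] {S v : List α} (hS : S ≠ [])
    (hv : v <:+: S) : phraseProb S v = (occ S v : ℝ) / (S.length : ℝ) := by
  have h0 : ∀ j, ((occ S (v.take j) : ℝ)) ≠ 0 := fun j =>
    Nat.cast_ne_zero.mpr (occ_take_pos' hS hv j).ne'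
  rw [phraseProb, prod_telescope' h0 v.length]
  simp [occ]

lemma phraseCost_eq' {α : Type*} [DecidableEq α] {S v : List α} (hS : S ≠ [])
    (hv : v <:+: S) :
    phraseCost S v = Real.logb 2 (S.length : ℝ) - Real.logb 2 (occ S v : ℝ) := by
  rw [phraseCost, phraseProb_eq' hS hv, Real.logb_div
    (Nat.cast_ne_zero.mpr (occ_pos' hS hv).ne')
    (Nat.cast_ne_zero.mpr (List.length_pos_iff.mpr hS).ne')]
  ring

lemma occ_sum_le' {α : Type*} [DecidableEq α] (S : List α) (T : Finset (List α)) (ℓ : ℕ)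
    (hlen : ∀ a ∈ T, a.length = ℓ) (hne : ∀ a ∈ T, a ≠ []) :
    ∑ a ∈ T, occ S a ≤ S.length := by
  classical
  have hcard : ∀ a ∈ T, occ S a = ((Finset.range S.length).filter
      (fun i => (S.drop i).take a.length = a)).card := fun a ha => occ_card' S a (hne a ha)
  rw [Finset.sum_congr rfl hcard]
  set F : List α → Finset ℕ := fun a =>
    (Finset.range S.length).filter (fun i => (S.drop i).take a.length = a) with hF
  have hdisj : ∀ a ∈ T, ∀ b ∈ T, a ≠ b → Disjoint (F a) (F b) := by
    intro a ha b hb hab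
    rw [Finset.disjoint_left]
    intro i hia hib
    rw [hF] at hia hib
    simp only [Finset.mem_filter] at hia hib
    apply hab
    rw [← hia.2, ← hib.2, hlen a ha, hlen b hb]
  rw [← Finset.card_biUnion hdisj]
  calc (T.biUnion F).card ≤ (Finset.range S.length).card := by
        apply Finset.card_le_card
        intro i hi
        rw [Finset.mem_biUnion] at hi
        obtain ⟨a, _, hia⟩ := hi
        exact Finset.mem_of_mem_filter i hia
    _ = S.length := Finset.card_range _

lemma count_map_length' {α : Type*} [DecidableEq α] (Y : List (List α)) (ℓ : ℕ) :
    (Y.map List.length).count ℓ =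
      ∑ a ∈ Y.toFinset.filter (fun a => a.length = ℓ), Y.count a := by
  classical
  have h1 : (Y.map List.length).count ℓ =
      Multiset.card (Multiset.filter (fun a => ℓ = a.length) (↑Y : Multiset (List α))) := by
    rw [← Multiset.coe_count, ← Multiset.map_coe, Multiset.count_map]
  have h2 : Multiset.card (Multiset.filter (fun a => ℓ = a.length) (↑Y : Multiset (List α)))
      = ∑ a ∈ (Multiset.filter (fun a => ℓ = a.length) (↑Y : Multiset (List α))).toFinset,
        Multiset.count a (Multiset.filter (fun a => ℓ = a.length) (↑Y : Multiset (List α))) :=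
    (Multiset.toFinset_sum_count_eq _).symm
  have h3 : (Multiset.filter (fun a => ℓ = a.length) (↑Y : Multiset (List α))).toFinset
      = Y.toFinset.filter (fun a => a.length = ℓ) := by
    rw [Multiset.toFinset_filter]
    ext a
    simp only [Finset.mem_filter, Multiset.mem_toFinset, Multiset.mem_coe,
      List.mem_toFinset]
    exact and_congr Iff.rfl eq_comm
  rw [h1, h2, h3]
  refine Finset.sum_congr rfl fun a ha => ?_
  rw [Finset.mem_filter] at ha
  rw [Multiset.count_filter, if_pos ha.2.symm, Multiset.coe_count]
  congr 1
  exact lawful_beq_subsingleton _ _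

lemma logsum_log' {α : Type*} (T : Finset α) (u v : α → ℝ)
    (hu : ∀ a ∈ T, 0 < u a) (hv : ∀ a ∈ T, 0 < v a) :
    ∑ a ∈ T, u a * Real.log (v a / u a) ≤
      (∑ a ∈ T, u a) * Real.log ((∑ a ∈ T, v a) / (∑ a ∈ T, u a)) := by
  rcases T.eq_empty_or_nonempty with rfl | hT
  · simp
  set U := ∑ a ∈ T, u a with hU
  set V := ∑ a ∈ T, v a with hV
  have hUpos : 0 < U := Finset.sum_pos hu hT
  have hVpos : 0 < V := Finset.sum_pos hv hT
  have key : ∀ a ∈ T, u a * Real.log (v a / u a) ≤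
      (v a * U / V - u a) + u a * Real.log (V / U) := by
    intro a ha
    have hua := hu a ha
    have hva := hv a ha
    have hx : (0:ℝ) < (v a * U) / (u a * V) := by positivity
    have hlog := Real.log_le_sub_one_of_pos hx
    have hsplit : Real.log (v a / u a) =
        Real.log ((v a * U) / (u a * V)) + Real.log (V / U) := by
      rw [← Real.log_mul (by positivity) (by positivity)]
      congr 1
      field_simp
    have hmul : u a * ((v a * U) / (u a * V) - 1) = v a * U / V - u a := by
      field_simp
    calc u a * Real.log (v a / u a)
        = u a * Real.log ((v a * U) / (u a * V)) + u a * Real.log (V / U) := by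
          rw [hsplit]; ring
      _ ≤ u a * ((v a * U) / (u a * V) - 1) + u a * Real.log (V / U) := by
          have := mul_le_mul_of_nonneg_left hlog hua.le
          linarith
      _ = (v a * U / V - u a) + u a * Real.log (V / U) := by rw [hmul]
  calc ∑ a ∈ T, u a * Real.log (v a / u a)
      ≤ ∑ a ∈ T, ((v a * U / V - u a) + u a * Real.log (V / U)) :=
        Finset.sum_le_sum key
    _ = (V * U / V - U) + U * Real.log (V / U) := by
        rw [Finset.sum_add_distrib, Finset.sum_sub_distrib, ← Finset.sum_mul]
        congr 1
        · congr 1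
          rw [← Finset.sum_div, ← Finset.sum_mul]
    _ = U * Real.log (V / U) := by
        rw [mul_comm V U, mul_div_assoc, div_self hVpos.ne', mul_one]
        ring

lemma logsum_logb' {α : Type*} (T : Finset α) (u v : α → ℝ)
    (hu : ∀ a ∈ T, 0 < u a) (hv : ∀ a ∈ T, 0 < v a) :
    ∑ a ∈ T, u a * Real.logb 2 (v a / u a) ≤
      (∑ a ∈ T, u a) * Real.logb 2 ((∑ a ∈ T, v a) / (∑ a ∈ T, u a)) := by
  have h := logsum_log' T u v hu hv
  have h2 : (0:ℝ) < Real.log 2 := Real.log_pos one_lt_two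
  simp only [Real.logb]
  calc ∑ x ∈ T, u x * (Real.log (v x / u x) / Real.log 2)
      = (∑ a ∈ T, u a * Real.log (v a / u a)) / Real.log 2 := by
        rw [Finset.sum_div]
        exact Finset.sum_congr rfl fun a _ => by ring
    _ ≤ ((∑ a ∈ T, u a) * Real.log ((∑ a ∈ T, v a) / ∑ a ∈ T, u a)) / Real.log 2 :=
        by gcongr
    _ = (∑ a ∈ T, u a) * (Real.log ((∑ a ∈ T, v a) / ∑ a ∈ T, u a) / Real.log 2) := by
        ring

lemma count_irrel' {α : Type*} (i₁ i₂ : BEq α) [l₁ : @LawfulBEq α i₁] [l₂ : @LawfulBEq α i₂]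
    (a : α) (l : List α) : @List.count α i₁ a l = @List.count α i₂ a l := by
  cases lawful_beq_subsingleton i₁ i₂
  rfl

theorem stmt2 {Γ : Type*} [DecidableEq Γ] (S : List Γ) (Y : List (List Γ))
    (hY : Y.flatten = S) (hne : ∀ y ∈ Y, y ≠ []) :
    nH0 Y ≤ parseCost S Y + nH0 (Y.map List.length) := by
  classical
  rcases eq_or_ne Y [] with rfl | hYne
  · simp [nH0, parseCost]
  have hS : S ≠ [] := by
    intro h
    obtain ⟨y, hy⟩ := List.exists_mem_of_ne_nil Y hYne
    exact hne y hy ((List.flatten_eq_nil_iff.mp (hY.trans h)) y hy)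
  have hn : 0 < S.length := List.length_pos_iff.mpr hS
  have hc : 0 < Y.length := List.length_pos_iff.mpr hYne
  have hnR : (0:ℝ) < (S.length : ℝ) := by exact_mod_cast hn
  have hcR : (0:ℝ) < (Y.length : ℝ) := by exact_mod_cast hc
  have hinfix : ∀ a ∈ Y, a <:+: S := fun a ha => hY ▸ List.infix_of_mem_flatten ha
  have hPC : parseCost S Y = ∑ a ∈ Y.toFinset,
      (Y.count a : ℝ) * (Real.logb 2 (S.length : ℝ) - Real.logb 2 (occ S a : ℝ)) := by
    rw [parseCost, Finset.sum_list_map_count]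
    refine Finset.sum_congr rfl fun a ha => ?_
    rw [List.mem_toFinset] at ha
    rw [phraseCost_eq' hS (hinfix a ha), nsmul_eq_mul]
    congr 2
    exact count_irrel' instBEqOfDecidableEq _ a Y
  -- fiber mapping
  have hmaps : ∀ a ∈ Y.toFinset, a.length ∈ (Y.map List.length).toFinset := by
    intro a ha
    rw [List.mem_toFinset] at ha ⊢
    exact List.mem_map_of_mem ha
  -- main fiberwise inequality
  have main : ∑ a ∈ Y.toFinset,
      (-((Y.count a : ℝ) * Real.logb 2 ((Y.count a : ℝ) / (Y.length : ℝ)))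
        - (Y.count a : ℝ) * (Real.logb 2 (S.length : ℝ) - Real.logb 2 (occ S a : ℝ)))
      ≤ ∑ ℓ ∈ (Y.map List.length).toFinset,
        -(((Y.map List.length).count ℓ : ℝ) *
          Real.logb 2 (((Y.map List.length).count ℓ : ℝ) / (Y.length : ℝ))) := by
    rw [← Finset.sum_fiberwise_of_maps_to hmaps]
    refine Finset.sum_le_sum fun ℓ hℓ => ?_
    set Tl := Y.toFinset.filter (fun a => a.length = ℓ) with hTl
    have hmemY : ∀ a ∈ Tl, a ∈ Y := fun a ha =>
      List.mem_toFinset.mp (Finset.mem_of_mem_filter a ha)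
    have hlenl : ∀ a ∈ Tl, a.length = ℓ := fun a ha => (Finset.mem_filter.mp ha).2
    have hnea : ∀ a ∈ Tl, a ≠ [] := fun a ha => hne a (hmemY a ha)
    have hu : ∀ a ∈ Tl, (0:ℝ) < (Y.count a : ℝ) := fun a ha => by
      exact_mod_cast List.count_pos_iff.mpr (hmemY a ha)
    have hoccp : ∀ a ∈ Tl, 0 < occ S a := fun a ha =>
      occ_pos' hS (hinfix a (hmemY a ha))
    set v : List Γ → ℝ := fun a => (occ S a : ℝ) * (Y.length : ℝ) / (S.length : ℝ) with hv
    have hvp : ∀ a ∈ Tl, 0 < v a := fun a ha => by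
      have := hoccp a ha
      have hoR : (0:ℝ) < (occ S a : ℝ) := by exact_mod_cast this
      rw [hv]
      positivity
    have hd : 0 < (Y.map List.length).count ℓ :=
      List.count_pos_iff.mpr (List.mem_toFinset.mp hℓ)
    have hdR : (0:ℝ) < ((Y.map List.length).count ℓ : ℝ) := by exact_mod_cast hd
    have hdsum : ((Y.map List.length).count ℓ : ℝ) = ∑ a ∈ Tl, (Y.count a : ℝ) := by
      rw [count_map_length' Y ℓ]
      push_cast
      rfl
    -- rewrite each term
    have hterm : ∀ a ∈ Tl,
        (-((Y.count a : ℝ) * Real.logb 2 ((Y.count a : ℝ) / (Y.length : ℝ)))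
          - (Y.count a : ℝ) * (Real.logb 2 (S.length : ℝ) - Real.logb 2 (occ S a : ℝ)))
        = (Y.count a : ℝ) * Real.logb 2 (v a / (Y.count a : ℝ)) := by
      intro a ha
      have hua := hu a ha
      have hoR : (0:ℝ) < (occ S a : ℝ) := by exact_mod_cast hoccp a ha
      have h1 : v a / (Y.count a : ℝ)
          = ((occ S a : ℝ) * (Y.length : ℝ)) / ((S.length : ℝ) * (Y.count a : ℝ)) := by
        rw [hv, div_div]
      have hA : Real.logb 2 (((occ S a : ℝ) * (Y.length : ℝ)) / ((S.length : ℝ) * (Y.count a : ℝ)))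
          = Real.logb 2 (occ S a : ℝ) + Real.logb 2 (Y.length : ℝ)
            - (Real.logb 2 (S.length : ℝ) + Real.logb 2 (Y.count a : ℝ)) := by
        rw [Real.logb_div (by positivity) (by positivity),
          Real.logb_mul hoR.ne' hcR.ne', Real.logb_mul hnR.ne' hua.ne']
      have hB : Real.logb 2 ((Y.count a : ℝ) / (Y.length : ℝ))
          = Real.logb 2 (Y.count a : ℝ) - Real.logb 2 (Y.length : ℝ) :=
        Real.logb_div hua.ne' hcR.ne'
      rw [h1, hA, hB]
      ring
    rw [Finset.sum_congr rfl hterm]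
    have hlogsum := logsum_logb' Tl (fun a => (Y.count a : ℝ)) v hu hvp
    refine hlogsum.trans ?_
    rw [← hdsum]
    -- bound the sum of v
    have hoccsum : ∑ a ∈ Tl, occ S a ≤ S.length := occ_sum_le' S Tl ℓ hlenl hnea
    have hsumv_le : ∑ a ∈ Tl, v a ≤ (Y.length : ℝ) := by
      have h1 : ∑ a ∈ Tl, v a
          = (∑ a ∈ Tl, (occ S a : ℝ)) * (Y.length : ℝ) / (S.length : ℝ) := by
        simp only [hv]
        rw [← Finset.sum_div, ← Finset.sum_mul]
      rw [h1]
      have h2 : (∑ a ∈ Tl, (occ S a : ℝ)) ≤ (S.length : ℝ) := by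
        rw [← Nat.cast_sum]
        exact_mod_cast hoccsum
      calc (∑ a ∈ Tl, (occ S a : ℝ)) * (Y.length : ℝ) / (S.length : ℝ)
          ≤ (S.length : ℝ) * (Y.length : ℝ) / (S.length : ℝ) := by gcongr
        _ = (Y.length : ℝ) := by field_simp
    have hTlne : Tl.Nonempty := by
      by_contra h
      rw [Finset.not_nonempty_iff_eq_empty] at h
      rw [h, Finset.sum_empty] at hdsum
      linarith
    have hsumv_pos : 0 < ∑ a ∈ Tl, v a := Finset.sum_pos hvp hTlne
    have hmono : Real.logb 2 ((∑ a ∈ Tl, v a) / ((Y.map List.length).count ℓ : ℝ))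
        ≤ Real.logb 2 ((Y.length : ℝ) / ((Y.map List.length).count ℓ : ℝ)) := by
      apply (Real.logb_le_logb one_lt_two (by positivity) (by positivity)).mpr
      gcongr
    calc ((Y.map List.length).count ℓ : ℝ) *
          Real.logb 2 ((∑ a ∈ Tl, v a) / ((Y.map List.length).count ℓ : ℝ))
        ≤ ((Y.map List.length).count ℓ : ℝ) *
          Real.logb 2 ((Y.length : ℝ) / ((Y.map List.length).count ℓ : ℝ)) :=
          mul_le_mul_of_nonneg_left hmono hdR.le
      _ = -(((Y.map List.length).count ℓ : ℝ) *
          Real.logb 2 (((Y.map List.length).count ℓ : ℝ) / (Y.length : ℝ))) := by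
          rw [Real.logb_div hcR.ne' hdR.ne', Real.logb_div hdR.ne' hcR.ne']
          ring
  -- finish
  have einst1 : ∀ a : List Γ, @List.count (List Γ) instBEqOfDecidableEq a Y = Y.count a :=
    fun a => count_irrel' instBEqOfDecidableEq _ a Y
  have einst2 : ∀ ℓ : ℕ, @List.count ℕ instBEqOfDecidableEq ℓ (Y.map List.length)
      = (Y.map List.length).count ℓ := fun ℓ => count_irrel' instBEqOfDecidableEq _ ℓ _
  rw [nH0, nH0, hPC]
  simp only [List.length_map, einst1, einst2]
  rw [Finset.sum_sub_distrib] at main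
  have e1 : ∑ a ∈ Y.toFinset,
      -((Y.count a : ℝ) * Real.logb 2 ((Y.count a : ℝ) / (Y.length : ℝ)))
      = -∑ a ∈ Y.toFinset,
        (Y.count a : ℝ) * Real.logb 2 ((Y.count a : ℝ) / (Y.length : ℝ)) := by
    rw [Finset.sum_neg_distrib]
  have e2 : ∑ ℓ ∈ (Y.map List.length).toFinset,
      -(((Y.map List.length).count ℓ : ℝ) *
        Real.logb 2 (((Y.map List.length).count ℓ : ℝ) / (Y.length : ℝ)))
      = -∑ ℓ ∈ (Y.map List.length).toFinset,
        ((Y.map List.length).count ℓ : ℝ) *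
        Real.logb 2 (((Y.map List.length).count ℓ : ℝ) / (Y.length : ℝ)) := by
    rw [Finset.sum_neg_distrib]
  rw [e1, e2] at main
  linarith
end

section
/- Let S be a string with |S| = n, Y_S a parsing of S, and L = Lengths(Y_S) the word of phrase lengths (so |L| = |Y_S| and the entries of L sum to n). Then |L|·H₀(L) ≤ |L|·log(n/|L|) + |L|·(1 + log e). -/
open Finset

theorem stmt5 {Γ : Type*} (S : List Γ) (Y : List (List Γ))
    (hY : Y.flatten = S) (hne : ∀ y ∈ Y, y ≠ []) (L : List ℕ) (hL : L = Y.map List.length) :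
    nH0 L ≤ (L.length : ℝ) * Real.logb 2 ((S.length : ℝ) / (L.length : ℝ)) +
      (L.length : ℝ) * (1 + Real.logb 2 (Real.exp 1)) := by
  classical
  subst hY
  -- entries of L are positive
  have ha1 : ∀ a ∈ L, 1 ≤ a := by
    intro a ha
    rw [hL, List.mem_map] at ha
    obtain ⟨y, hy, rfl⟩ := ha
    exact List.length_pos_iff.mpr (hne y hy)
  have hnlen : (Y.flatten.length : ℝ) = (L.sum : ℝ) := by
    rw [hL, List.length_flatten]
  rw [hnlen]
  rcases Nat.eq_zero_or_pos L.length with h0 | hNpos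
  · rw [List.length_eq_zero_iff] at h0
    subst h0
    simp [nH0]
  -- notation
  set F := L.toFinset with hF
  set N : ℕ := L.length with hNdef
  set n : ℕ := L.sum with hndef
  have hNn : N ≤ n := by
    simpa using List.card_nsmul_le_sum L 1 ha1
  have hnpos : 0 < n := lt_of_lt_of_le hNpos hNn
  have hNr : (0:ℝ) < N := by exact_mod_cast hNpos
  have hnr : (0:ℝ) < n := by exact_mod_cast hnpos
  set m : ℝ := (n : ℝ) / (N : ℝ) with hmdef
  have hm1 : 1 ≤ m := (one_le_div hNr).mpr (by exact_mod_cast hNn)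
  have hm0 : (0:ℝ) < m := lt_of_lt_of_le one_pos hm1
  have hm10 : (0:ℝ) < m + 1 := by linarith
  set r : ℝ := m / (m + 1) with hrdef
  have hr0 : 0 ≤ r := le_of_lt (div_pos hm0 hm10)
  have hr1 : r < 1 := (div_lt_one hm10).mpr (by linarith)
  have hrpos : 0 < r := div_pos hm0 hm10
  -- the geometric "distribution"
  set q : ℕ → ℝ := fun a => (m + 1)⁻¹ * r ^ (a - 1) with hqdef
  have hqpos : ∀ a, 0 < q a := fun a => mul_pos (inv_pos.mpr hm10) (pow_pos hrpos _)
  -- sum of q over F is at most 1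
  have hqsum : ∑ a ∈ F, q a ≤ 1 := by
    have hgeo : ∑ a ∈ F, r ^ (a - 1) ≤ (1 - r)⁻¹ := by
      have hinj : ∀ a ∈ F, ∀ b ∈ F, a - 1 = b - 1 → a = b := by
        intro a ha b hb hab
        have h1 := ha1 a (List.mem_toFinset.mp ha)
        have h2 := ha1 b (List.mem_toFinset.mp hb)
        omega
      have himg : ∑ k ∈ F.image (fun a => a - 1), r ^ k = ∑ a ∈ F, r ^ (a - 1) :=
        Finset.sum_image hinj
      have hsummable : Summable (fun k : ℕ => r ^ k) :=
        summable_geometric_of_lt_one hr0 hr1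
      calc ∑ a ∈ F, r ^ (a - 1) = ∑ k ∈ F.image (fun a => a - 1), r ^ k := himg.symm
        _ ≤ ∑' k : ℕ, r ^ k := hsummable.sum_le_tsum _ (fun k _ => pow_nonneg hr0 k)
        _ = (1 - r)⁻¹ := tsum_geometric_of_lt_one hr0 hr1
    have h1r : 1 - r = (m + 1)⁻¹ := by
      rw [hrdef, one_sub_div hm10.ne', add_sub_cancel_left, one_div]
    calc ∑ a ∈ F, q a = (m + 1)⁻¹ * ∑ a ∈ F, r ^ (a - 1) := by
          rw [Finset.mul_sum]
      _ ≤ (m + 1)⁻¹ * (1 - r)⁻¹ := by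
          apply mul_le_mul_of_nonneg_left hgeo (le_of_lt (inv_pos.mpr hm10))
      _ = 1 := by rw [h1r, inv_inv]; exact inv_mul_cancel₀ (ne_of_gt hm10)
  -- counts
  have hcpos : ∀ a ∈ F, 0 < L.count a := by
    intro a ha
    exact List.count_pos_iff.mpr (List.mem_toFinset.mp ha)
  have hsum1 : ∑ a ∈ F, (L.count a : ℝ) = (N : ℝ) := by
    rw [← Nat.cast_sum]
    exact_mod_cast congrArg (Nat.cast : ℕ → ℝ) (List.sum_toFinset_count_eq_length L)
  have hsum2 : ∑ a ∈ F, (L.count a : ℝ) * (a : ℝ) = (n : ℝ) := by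
    have h2 : ∑ a ∈ F, L.count a * a = n := by
      have := Finset.sum_list_count L
      simpa [smul_eq_mul] using this.symm
    calc ∑ a ∈ F, (L.count a : ℝ) * (a : ℝ) = ((∑ a ∈ F, L.count a * a : ℕ) : ℝ) := by
          push_cast; ring_nf
      _ = (n : ℝ) := by rw [h2]
  have hlog2 : (0:ℝ) < Real.log 2 := Real.log_pos (by norm_num)
  -- per-element Gibbs bound
  have hkey : ∀ a ∈ F, (L.count a : ℝ) * (-Real.logb 2 ((L.count a : ℝ) / (N : ℝ)))
      ≤ (L.count a : ℝ) * (-Real.logb 2 (q a)) + ((N : ℝ) * q a - (L.count a : ℝ)) / Real.log 2 := by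
    intro a ha
    have hc : (0:ℝ) < (L.count a : ℝ) := by exact_mod_cast hcpos a ha
    have hcN : (0:ℝ) < (L.count a : ℝ) / (N : ℝ) := div_pos hc hNr
    have hq := hqpos a
    have hx : (0:ℝ) < q a / ((L.count a : ℝ) / (N : ℝ)) := div_pos hq hcN
    have hlb : Real.logb 2 (q a / ((L.count a : ℝ) / (N : ℝ)))
        ≤ (q a / ((L.count a : ℝ) / (N : ℝ)) - 1) / Real.log 2 := by
      rw [Real.logb]
      exact div_le_div_of_nonneg_right (Real.log_le_sub_one_of_pos hx) hlog2.le
    have hsplit : Real.logb 2 (q a / ((L.count a : ℝ) / (N : ℝ)))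
        = Real.logb 2 (q a) - Real.logb 2 ((L.count a : ℝ) / (N : ℝ)) :=
      Real.logb_div (ne_of_gt hq) (ne_of_gt hcN)
    have h2 : Real.logb 2 (q a) - Real.logb 2 ((L.count a : ℝ) / (N : ℝ))
        ≤ (q a / ((L.count a : ℝ) / (N : ℝ)) - 1) / Real.log 2 := hsplit ▸ hlb
    have h3 := mul_le_mul_of_nonneg_left h2 (le_of_lt hc)
    have heq : (L.count a : ℝ) * ((q a / ((L.count a : ℝ) / (N : ℝ)) - 1) / Real.log 2)
        = ((N : ℝ) * q a - (L.count a : ℝ)) / Real.log 2 := by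
      field_simp
    nlinarith [h3, heq]
  -- sum it
  have hgibbs : nH0 L ≤ ∑ a ∈ F, (L.count a : ℝ) * (-Real.logb 2 (q a)) := by
    have h1 : nH0 L = ∑ a ∈ F, (L.count a : ℝ) * (-Real.logb 2 ((L.count a : ℝ) / (N : ℝ))) := by
      rw [nH0, ← Finset.sum_neg_distrib]
      apply Finset.sum_congr rfl
      intro a _
      ring
    have h2 : ∑ a ∈ F, (L.count a : ℝ) * (-Real.logb 2 ((L.count a : ℝ) / (N : ℝ)))
        ≤ ∑ a ∈ F, ((L.count a : ℝ) * (-Real.logb 2 (q a)) + ((N : ℝ) * q a - (L.count a : ℝ)) / Real.log 2) :=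
      Finset.sum_le_sum hkey
    have h3 : ∑ a ∈ F, ((L.count a : ℝ) * (-Real.logb 2 (q a)) + ((N : ℝ) * q a - (L.count a : ℝ)) / Real.log 2)
        = ∑ a ∈ F, (L.count a : ℝ) * (-Real.logb 2 (q a))
          + ((N : ℝ) * ∑ a ∈ F, q a - (N : ℝ)) / Real.log 2 := by
      rw [Finset.sum_add_distrib]
      congr 1
      rw [← Finset.sum_div, Finset.sum_sub_distrib, ← Finset.mul_sum, hsum1]
    have h4 : ((N : ℝ) * ∑ a ∈ F, q a - (N : ℝ)) / Real.log 2 ≤ 0 := by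
      apply div_nonpos_of_nonpos_of_nonneg _ (le_of_lt hlog2)
      nlinarith [hqsum]
    rw [h1]
    linarith [h2, h3 ▸ h2]
  -- evaluate the geometric cross-entropy
  have hmne : m ≠ 0 := ne_of_gt hm0
  have hm1ne : m + 1 ≠ 0 := ne_of_gt hm10
  have hlogq : ∀ a ∈ F, -Real.logb 2 (q a)
      = Real.logb 2 (m+1) + ((a:ℝ) - 1) * (Real.logb 2 (m+1) - Real.logb 2 m) := by
    intro a ha
    have h1 := ha1 a (List.mem_toFinset.mp ha)
    have hcast : ((a - 1 : ℕ) : ℝ) = (a : ℝ) - 1 := by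
      rw [Nat.cast_sub h1]; norm_num
    rw [hqdef]
    simp only
    rw [Real.logb_mul (inv_ne_zero hm1ne) (ne_of_gt (pow_pos hrpos _)),
      Real.logb_inv, Real.logb_pow, hrdef, Real.logb_div hmne hm1ne, hcast]
    ring
  have hcross : ∑ a ∈ F, (L.count a : ℝ) * (-Real.logb 2 (q a))
      = (N : ℝ) * Real.logb 2 m + (n : ℝ) * (Real.logb 2 (m+1) - Real.logb 2 m) := by
    have e1 : ∀ a ∈ F, (L.count a : ℝ) * (-Real.logb 2 (q a))
        = (L.count a : ℝ) * Real.logb 2 (m+1)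
          + ((L.count a : ℝ) * (a:ℝ)) * (Real.logb 2 (m+1) - Real.logb 2 m)
          - (L.count a : ℝ) * (Real.logb 2 (m+1) - Real.logb 2 m) := by
      intro a ha
      rw [hlogq a ha]; ring
    rw [Finset.sum_congr rfl e1, Finset.sum_sub_distrib, Finset.sum_add_distrib,
      ← Finset.sum_mul, ← Finset.sum_mul, ← Finset.sum_mul, hsum1, hsum2]
    ring
  -- final estimate
  have hfin : (n : ℝ) * (Real.logb 2 (m+1) - Real.logb 2 m) ≤ (N : ℝ) * Real.logb 2 (Real.exp 1) := by
    have hd : Real.logb 2 (m+1) - Real.logb 2 m = Real.logb 2 ((m+1)/m) :=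
      (Real.logb_div hm1ne hmne).symm
    have hlog : Real.log ((m+1)/m) ≤ 1/m := by
      have h := Real.log_le_sub_one_of_pos (show (0:ℝ) < (m+1)/m from div_pos hm10 hm0)
      have : (m+1)/m - 1 = 1/m := by field_simp; ring
      linarith [this ▸ h]
    have he : Real.logb 2 (Real.exp 1) = 1 / Real.log 2 := by
      rw [Real.logb, Real.log_exp]
    rw [hd, he, Real.logb]
    have h1 : (n : ℝ) * Real.log ((m+1)/m) ≤ (n : ℝ) * (1/m) :=
      mul_le_mul_of_nonneg_left hlog (le_of_lt hnr)
    have h2 : (n : ℝ) * (1/m) = (N : ℝ) := by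
      rw [hmdef]; field_simp
    calc (n : ℝ) * (Real.log ((m+1)/m) / Real.log 2) = ((n:ℝ) * Real.log ((m+1)/m)) / Real.log 2 := by ring
      _ ≤ (N : ℝ) / Real.log 2 := by
          apply div_le_div_of_nonneg_right _ hlog2.le
          linarith
      _ = (N : ℝ) * (1 / Real.log 2) := by ring
  calc nH0 L ≤ (N : ℝ) * Real.logb 2 m + (n : ℝ) * (Real.logb 2 (m+1) - Real.logb 2 m) := by
        rw [← hcross]; exact hgibbs
    _ ≤ (N : ℝ) * Real.logb 2 m + (N : ℝ) * Real.logb 2 (Real.exp 1) := by linarith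
    _ ≤ (N : ℝ) * Real.logb 2 ((n : ℝ) / (N : ℝ)) + (N : ℝ) * (1 + Real.logb 2 (Real.exp 1)) := by
        rw [hmdef]
        nlinarith [hNr]
end

section
/- Removing a letter from a string never increases its unnormalized zero-order empirical entropy: if w' is obtained from w by deleting one occurrence of some letter, then |w'|·H₀(w') ≤ |w|·H₀(w). -/
open Finset

noncomputable def fent (x : ℝ) : ℝ := x * Real.logb 2 x

lemma fent_convex : ConvexOn ℝ (Set.Ici 0) fent := by
  have h : fent = fun x => (Real.log 2)⁻¹ • (x * Real.log x) := by
    funext x; simp [fent, Real.logb, div_eq_inv_mul]; ring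
  rw [h]
  exact Real.convexOn_mul_log.smul (by positivity)

lemma key {c n : ℝ} (hc : 1 ≤ c) (hn : c ≤ n) :
    fent c - fent (c-1) ≤ fent n - fent (n-1) := by
  have hpos : (0:ℝ) < n - c + 1 := by linarith
  set t : ℝ := (n - c + 1)⁻¹ with ht
  have ht0 : 0 < t := by positivity
  have ht1 : t ≤ 1 := by
    rw [ht]; rw [inv_le_one_iff₀]; right; linarith
  have hs0 : 0 ≤ 1 - t := by linarith
  have hmul : t * (n - c + 1) = 1 := inv_mul_cancel₀ (by linarith)
  have hx : (c - 1) ∈ Set.Ici (0:ℝ) := by simp; linarith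
  have hy : n ∈ Set.Ici (0:ℝ) := by simp; linarith
  have h1 := fent_convex.2 hx hy hs0 ht0.le (by ring)
  have h2 := fent_convex.2 hx hy ht0.le hs0 (by ring)
  have e1 : (1 - t) • (c - 1) + t • n = c := by
    simp only [smul_eq_mul]; nlinarith [hmul]
  have e2 : t • (c - 1) + (1 - t) • n = n - 1 := by
    simp only [smul_eq_mul]; nlinarith [hmul]
  rw [e1] at h1; rw [e2] at h2
  simp only [smul_eq_mul] at h1 h2
  linarith

lemma sum_count_len {α : Type*} [DecidableEq α] (w : List α) :
    ∑ a ∈ w.toFinset, (w.count a : ℝ) = (w.length : ℝ) := by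
  rw [← Nat.cast_sum]
  norm_cast
  simpa using Multiset.toFinset_sum_count_eq (↑w : Multiset α)

lemma nH0_eq {α : Type*} [DecidableEq α] (w : List α) :
    nH0 w = fent (w.length) - ∑ a ∈ w.toFinset, fent (w.count a) := by
  unfold nH0 fent
  have hlen : ∀ a ∈ w.toFinset, (w.count a : ℝ) * Real.logb 2 ((w.count a : ℝ) / (w.length : ℝ))
      = (w.count a : ℝ) * Real.logb 2 (w.count a) - (w.count a : ℝ) * Real.logb 2 (w.length) := by
    intro a ha
    have hc : (0:ℕ) < w.count a := List.count_pos_iff.mpr (List.mem_toFinset.mp ha)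
    have hl : (0:ℕ) < w.length := lt_of_lt_of_le hc List.count_le_length
    rw [Real.logb_div (by exact_mod_cast hc.ne') (by exact_mod_cast hl.ne')]
    ring
  rw [Finset.sum_congr rfl hlen, Finset.sum_sub_distrib, ← Finset.sum_mul, sum_count_len]
  ring

theorem stmt8 {α : Type*} [DecidableEq α] (w w' : List α)
    (h : ∃ (u v : List α) (a : α), w = u ++ [a] ++ v ∧ w' = u ++ v) :
    nH0 w' ≤ nH0 w := by
  obtain ⟨u, v, d, hw, hw'⟩ := h
  have hlen : w.length = w'.length + 1 := by simp [hw, hw']; omega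
  have hcnt : ∀ a, w.count a = w'.count a + (if a = d then 1 else 0) := by
    intro a
    by_cases had : a = d <;>
      simp [hw, hw', had, List.count_append, List.count_cons] <;> grind
  have hdw : d ∈ w := by simp [hw]
  have hd : d ∈ w.toFinset := List.mem_toFinset.mpr hdw
  have hsub : w'.toFinset ⊆ w.toFinset := by
    intro a ha
    rw [List.mem_toFinset, ← List.count_pos_iff] at *
    have := hcnt a
    omega
  have hext : ∑ a ∈ w'.toFinset, fent (w'.count a)
      = ∑ a ∈ w.toFinset, fent (w'.count a) := by
    apply Finset.sum_subset hsub
    intro a _ ha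
    rw [List.count_eq_zero_of_not_mem (by simpa using ha)]
    simp [fent]
  have hdiff : ∑ a ∈ w.toFinset, (fent (w.count a) - fent (w'.count a))
      = fent (w.count d) - fent (w'.count d) := by
    apply Finset.sum_eq_single_of_mem d hd
    intro a _ hne
    rw [hcnt a]
    simp [hne]
  have hcd : w.count d = w'.count d + 1 := by have := hcnt d; simpa using this
  have hc1 : (1:ℝ) ≤ (w.count d : ℝ) := by
    exact_mod_cast Nat.one_le_iff_ne_zero.mpr (by
      have := List.count_pos_iff.mpr hdw; omega)
  have hcn : (w.count d : ℝ) ≤ (w.length : ℝ) := by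
    exact_mod_cast (List.count_le_length : w.count d ≤ w.length)
  have hk := key hc1 hcn
  rw [nH0_eq w, nH0_eq w', hext]
  rw [Finset.sum_sub_distrib] at hdiff
  have e1 : ((w'.length : ℝ)) = (w.length : ℝ) - 1 := by rw [hlen]; push_cast; ring
  have e2 : ((w'.count d : ℝ)) = (w.count d : ℝ) - 1 := by rw [hcd]; push_cast; ring
  rw [e1] at *
  rw [e2] at hdiff
  linarith
end

section
/- Let (S', G) be a full grammar in which every nonterminal except the starting symbol occurs at least twice among the right-hand sides of G and S', generating a string S. Then the sum over all nonterminals X of G (and the starting string counted as expanding to S) of |exp(X)| over all occurrences, i.e., the total length of expansions of all symbols appearing on right-hand sides including S', is at most 2|S|. -/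
open Finset

/-- Expansion of a string of terminals and nonterminals, given the
expansion `expN` of each nonterminal. -/
def expandStr {Γ N : Type*} (expN : N → List Γ) (w : List (Γ ⊕ N)) : List Γ :=
  w.flatMap (Sum.elim (fun a => [a]) expN)

lemma key_count_le {Γ N : Type*} [Fintype N] [DecidableEq Γ] [DecidableEq N]
    (expN : N → List Γ) (w : List (Γ ⊕ N)) :
    ∑ Y : N, w.count (Sum.inr Y) * (expN Y).length ≤ (expandStr expN w).length := by
  induction w with
  | nil => simp [expandStr]
  | cons s w ih =>
    have hc : ∀ Y : N, (s :: w).count (Sum.inr Y)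
        = w.count (Sum.inr Y) + (if s = Sum.inr Y then 1 else 0) := by
      intro Y
      cases s with
      | inl a => simp [List.count_cons]; rfl
      | inr Z =>
        by_cases h : Z = Y
        · subst h; simp [List.count_cons]; exact decide_eq_true rfl
        · simp [List.count_cons, h, Sum.inr.injEq]; exact decide_eq_false h
    have hlen : (expandStr expN (s :: w)).length
        = (Sum.elim (fun a => [a]) expN s).length + (expandStr expN w).length := by
      simp [expandStr]
    rw [hlen]
    calc ∑ Y : N, (s :: w).count (Sum.inr Y) * (expN Y).length
        = ∑ Y : N, (w.count (Sum.inr Y) * (expN Y).length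
            + (if s = Sum.inr Y then 1 else 0) * (expN Y).length) := by
          apply Finset.sum_congr rfl; intro Y _; rw [hc]; ring
      _ = (∑ Y : N, w.count (Sum.inr Y) * (expN Y).length)
            + ∑ Y : N, (if s = Sum.inr Y then 1 else 0) * (expN Y).length := by
          rw [Finset.sum_add_distrib]
      _ ≤ (Sum.elim (fun a => [a]) expN s).length + (expandStr expN w).length := by
          rw [Nat.add_comm]
          apply Nat.add_le_add _ ih
          cases s with
          | inl a => simp
          | inr Z =>
            have : ∑ Y : N, (if (Sum.inr Z : Γ ⊕ N) = Sum.inr Y then 1 else 0)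
                * (expN Y).length = (expN Z).length := by
              rw [Finset.sum_eq_single Z]
              · simp
              · intro b _ hb
                simp [Sum.inr.injEq, (Ne.symm hb)]
              · simp
            rw [this]; simp
      _ = _ := rfl

theorem stmt11 {Γ N : Type*} [Fintype N] [DecidableEq Γ] [DecidableEq N]
    (rules : N → List (Γ ⊕ N)) (S' : List (Γ ⊕ N)) (expN : N → List Γ)
    (S : List Γ)
    (hexp : ∀ X, expN X = expandStr expN (rules X))
    (hS : S = expandStr expN S')
    (hIG2 : ∀ X : N, 2 ≤ S'.count (Sum.inr X) + ∑ Y, (rules Y).count (Sum.inr X)) :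
    (expandStr expN S').length + ∑ X, (expandStr expN (rules X)).length ≤ 2 * S.length := by
  have hrw : ∀ X, (expandStr expN (rules X)).length = (expN X).length := by
    intro X; rw [← hexp]
  have hS' : (expandStr expN S').length = S.length := by rw [hS]
  rw [hS']
  have h1 : ∑ Y : N, S'.count (Sum.inr Y) * (expN Y).length ≤ S.length := by
    rw [hS]; exact key_count_le expN S'
  have h2 : ∀ X : N, ∑ Y : N, (rules X).count (Sum.inr Y) * (expN Y).length
      ≤ (expN X).length := by
    intro X
    rw [hexp X]; exact key_count_le expN (rules X)
  have hmain : 2 * (∑ X : N, (expN X).length)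
      ≤ S.length + ∑ X : N, (expN X).length := by
    calc 2 * (∑ X : N, (expN X).length)
        = ∑ Y : N, 2 * (expN Y).length := by rw [Finset.mul_sum]
      _ ≤ ∑ Y : N, (S'.count (Sum.inr Y) + ∑ X : N, (rules X).count (Sum.inr Y))
            * (expN Y).length := by
          apply Finset.sum_le_sum; intro Y _
          exact Nat.mul_le_mul_right _ (hIG2 Y)
      _ = (∑ Y : N, S'.count (Sum.inr Y) * (expN Y).length)
            + ∑ Y : N, (∑ X : N, (rules X).count (Sum.inr Y)) * (expN Y).length := by
          rw [← Finset.sum_add_distrib]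
          apply Finset.sum_congr rfl; intro Y _; ring
      _ ≤ S.length + ∑ Y : N, (∑ X : N, (rules X).count (Sum.inr Y)) * (expN Y).length :=
          Nat.add_le_add_right h1 _
      _ ≤ S.length + ∑ X : N, (expN X).length := by
          apply Nat.add_le_add_left
          calc ∑ Y : N, (∑ X : N, (rules X).count (Sum.inr Y)) * (expN Y).length
              = ∑ X : N, ∑ Y : N, (rules X).count (Sum.inr Y) * (expN Y).length := by
                rw [Finset.sum_comm]
                apply Finset.sum_congr rfl; intro Y _
                rw [Finset.sum_mul]
            _ ≤ ∑ X : N, (expN X).length := Finset.sum_le_sum fun X _ => h2 X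
  have : ∑ X : N, (expN X).length ≤ S.length := by omega
  calc S.length + ∑ X : N, (expandStr expN (rules X)).length
      = S.length + ∑ X : N, (expN X).length := by
        congr 1; exact Finset.sum_congr rfl fun X _ => hrw X
    _ ≤ S.length + S.length := Nat.add_le_add_left this _
    _ = 2 * S.length := by ring
end

section
/- During Re-Pair's execution, replacing the most frequent pair never increases the maximum frequency over all pairs: if in string T the pair AB has maximum frequency f among all (non-overlapping-counted) digrams and all occurrences of AB are replaced by a fresh symbol X yielding T', then every digram of T' has frequency at most f. -/
/-- Number of non-overlapping occurrences (counted greedily left to right)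
of the digram `ab` in a string. -/
def pairFreq {α : Type*} [DecidableEq α] (a b : α) : List α → ℕ
  | x :: y :: rest =>
      if x = a ∧ y = b then 1 + pairFreq a b rest else pairFreq a b (y :: rest)
  | _ => 0

/-- Replace all (non-overlapping, leftmost-first) occurrences of the digram `ab`
by the fresh symbol `x`. -/
def replacePair {α : Type*} [DecidableEq α] (a b x : α) : List α → List α
  | u :: v :: rest =>
      if u = a ∧ v = b then x :: replacePair a b x rest
      else u :: replacePair a b x (v :: rest)
  | l => l

lemma pf_cons_le {α : Type*} [DecidableEq α] (c d v : α) :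
    ∀ L : List α, pairFreq c d L ≤ pairFreq c d (v :: L)
  | [] => by simp [pairFreq]
  | [w] => by simp [pairFreq]
  | w :: z :: rest => by
      by_cases h : v = c ∧ w = d
      · rw [show pairFreq c d (v :: w :: z :: rest) = 1 + pairFreq c d (z :: rest) from by
          rw [pairFreq, if_pos h]]
        by_cases h2 : w = c ∧ z = d
        · rw [pairFreq, if_pos h2]
          exact Nat.add_le_add_left (pf_cons_le c d z rest) 1
        · rw [pairFreq, if_neg h2]
          exact Nat.le_add_left _ 1
      · rw [show pairFreq c d (v :: w :: z :: rest) = pairFreq c d (w :: z :: rest) from by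
          rw [pairFreq, if_neg h]]

lemma pf_cons_ne {α : Type*} [DecidableEq α] (c d v : α) (h : v ≠ c) (L : List α) :
    pairFreq c d (v :: L) = pairFreq c d L := by
  cases L with
  | nil => simp [pairFreq]
  | cons w rest =>
      rw [pairFreq, if_neg]
      rintro ⟨h1, -⟩; exact h h1

lemma pf_le_count_left {α : Type*} [DecidableEq α] (c d : α) :
    ∀ L : List α, pairFreq c d L ≤ L.count c
  | [] => by simp [pairFreq]
  | [u] => by simp [pairFreq]
  | u :: v :: rest => by
      by_cases h : u = c ∧ v = d
      · rw [pairFreq, if_pos h, h.1, List.count_cons_self]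
        have h1 := pf_le_count_left c d rest
        have h2 : rest.count c ≤ (v :: rest).count c :=
          (List.sublist_cons_self v rest).count_le c
        omega
      · rw [pairFreq, if_neg h]
        have h1 := pf_le_count_left c d (v :: rest)
        have h2 : (v :: rest).count c ≤ (u :: v :: rest).count c :=
          (List.sublist_cons_self u (v :: rest)).count_le c
        omega

lemma pf_le_count_right {α : Type*} [DecidableEq α] (c d : α) :
    ∀ L : List α, pairFreq c d L ≤ L.count d
  | [] => by simp [pairFreq]
  | [u] => by simp [pairFreq]
  | u :: v :: rest => by
      by_cases h : u = c ∧ v = d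
      · rw [pairFreq, if_pos h]
        have h1 := pf_le_count_right c d rest
        have h2 : (v :: rest).count d = rest.count d + 1 := by
          rw [h.2, List.count_cons_self]
        have h3 : (v :: rest).count d ≤ (u :: v :: rest).count d :=
          (List.sublist_cons_self u (v :: rest)).count_le d
        omega
      · rw [pairFreq, if_neg h]
        have h1 := pf_le_count_right c d (v :: rest)
        have h2 : (v :: rest).count d ≤ (u :: v :: rest).count d :=
          (List.sublist_cons_self u (v :: rest)).count_le d
        omega

lemma count_replace {α : Type*} [DecidableEq α] (a b x : α) :
    ∀ L : List α, x ∉ L → (replacePair a b x L).count x = pairFreq a b L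
  | [], _ => by simp [replacePair, pairFreq]
  | [u], hx => by
      have : u ≠ x := by simp at hx; exact fun h => hx h.symm
      simp [replacePair, pairFreq, List.count_cons, this]
  | u :: v :: rest, hx => by
      have hu : u ≠ x := fun h => hx (by simp [h])
      have hxr : x ∉ v :: rest := fun h => hx (by simp [h])
      have hxr' : x ∉ rest := fun h => hx (by simp [h])
      by_cases h : u = a ∧ v = b
      · rw [replacePair, if_pos h, pairFreq, if_pos h, List.count_cons_self,
            count_replace a b x rest hxr']
        omega
      · rw [replacePair, if_neg h, pairFreq, if_neg h,
            List.count_cons_of_ne hu]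
        exact count_replace a b x (v :: rest) hxr

lemma pf_replace_le {α : Type*} [DecidableEq α] (a b x c d : α)
    (hc : c ≠ x) (hd : d ≠ x) :
    ∀ L : List α, pairFreq c d (replacePair a b x L) ≤ pairFreq c d L
  | [] => by simp [replacePair]
  | [u] => by simp [replacePair]
  | u :: v :: rest => by
      by_cases h : u = a ∧ v = b
      · rw [replacePair, if_pos h, pf_cons_ne c d x (fun h => hc h.symm)]
        calc pairFreq c d (replacePair a b x rest) ≤ pairFreq c d rest :=
              pf_replace_le a b x c d hc hd rest
          _ ≤ pairFreq c d (v :: rest) := pf_cons_le c d v rest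
          _ ≤ pairFreq c d (u :: v :: rest) := pf_cons_le c d u _
      · rw [replacePair, if_neg h]
        cases rest with
        | nil => simp [replacePair]
        | cons w rest' =>
            by_cases h2 : v = a ∧ w = b
            · rw [replacePair, if_pos h2]
              have hnd : ¬(u = c ∧ x = d) := fun hh => hd hh.2.symm
              rw [pairFreq, if_neg hnd, pf_cons_ne c d x (fun h => hc h.symm)]
              calc pairFreq c d (replacePair a b x rest') ≤ pairFreq c d rest' :=
                    pf_replace_le a b x c d hc hd rest'
                _ ≤ pairFreq c d (w :: rest') := pf_cons_le c d w rest'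
                _ ≤ pairFreq c d (v :: w :: rest') := pf_cons_le c d v _
                _ ≤ pairFreq c d (u :: v :: w :: rest') := pf_cons_le c d u _
            · rw [replacePair, if_neg h2]
              by_cases h3 : u = c ∧ v = d
              · have h1 := pf_replace_le a b x c d hc hd (w :: rest')
                rw [show pairFreq c d (u :: v :: replacePair a b x (w :: rest'))
                      = 1 + pairFreq c d (replacePair a b x (w :: rest')) from by
                    rw [pairFreq, if_pos h3],
                  show pairFreq c d (u :: v :: w :: rest')
                      = 1 + pairFreq c d (w :: rest') from by rw [pairFreq, if_pos h3]]
                exact Nat.add_le_add_left h1 1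
              · rw [pairFreq, if_neg h3,
                    show pairFreq c d (u :: v :: w :: rest') = pairFreq c d (v :: w :: rest')
                      from by rw [pairFreq, if_neg h3]]
                have := pf_replace_le a b x c d hc hd (v :: w :: rest')
                rw [replacePair, if_neg h2] at this
                exact this

theorem stmt12 {α : Type*} [DecidableEq α] (T : List α) (a b x : α) (f : ℕ)
    (hfresh : x ∉ T) (hab : pairFreq a b T = f) (hmax : ∀ c d, pairFreq c d T ≤ f) :
    ∀ c d, pairFreq c d (replacePair a b x T) ≤ f := by
  intro c d
  have hcount : (replacePair a b x T).count x = f := by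
    rw [count_replace a b x T hfresh, hab]
  by_cases hc : c = x
  · calc pairFreq c d (replacePair a b x T)
        ≤ (replacePair a b x T).count c := pf_le_count_left c d _
      _ = f := by rw [hc, hcount]
  · by_cases hd : d = x
    · calc pairFreq c d (replacePair a b x T)
          ≤ (replacePair a b x T).count d := pf_le_count_right c d _
        _ = f := by rw [hd, hcount]
    · exact le_trans (pf_replace_le a b x c d hc hd T) (hmax c d)
end

section
/- If at some point of Re-Pair's execution on an input of length n the most frequent pair in the working string occurs at least z times, then the number of nonterminals introduced so far is less than n/z. -/
section Aux
variable {α : Type*} [DecidableEq α]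

lemma twoStepInduction {P : List α → Prop} (h0 : P []) (h1 : ∀ u, P [u])
    (h2 : ∀ u v rest, P rest → P (v :: rest) → P (u :: v :: rest)) : ∀ L, P L := by
  have H : ∀ n (L : List α), L.length ≤ n → P L := by
    intro n
    induction n with
    | zero => intro L hL; cases L with
      | nil => exact h0
      | cons a t => simp at hL
    | succ n ih =>
      intro L hL
      match L with
      | [] => exact h0
      | [u] => exact h1 u
      | u :: v :: rest =>
        refine h2 u v rest (ih rest ?_) (ih (v :: rest) ?_) <;>
          simp only [List.length_cons] at hL ⊢ <;> omega
  exact fun L => H L.length L le_rfl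

lemma pairFreq_nil (c d : α) : pairFreq c d ([] : List α) = 0 := rfl
lemma pairFreq_single (c d u : α) : pairFreq c d [u] = 0 := rfl
lemma pairFreq_cons_cons (c d u v : α) (rest : List α) :
    pairFreq c d (u :: v :: rest) =
      if u = c ∧ v = d then 1 + pairFreq c d rest else pairFreq c d (v :: rest) := rfl

lemma pairFreq_cons_le (c d : α) :
    ∀ (M : List α) (y : α), pairFreq c d M ≤ pairFreq c d (y :: M) := by
  refine twoStepInduction (by simp [pairFreq]) (fun u y => by simp [pairFreq]) ?_
  intro u v rest ih1 ih2 y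
  rw [pairFreq_cons_cons c d y u (v :: rest)]
  by_cases h1 : y = c ∧ u = d
  · rw [if_pos h1, pairFreq_cons_cons c d u v rest]
    by_cases h2 : u = c ∧ v = d
    · rw [if_pos h2]; exact Nat.add_le_add_left (ih1 v) 1
    · rw [if_neg h2]; exact Nat.le_add_left _ 1
  · rw [if_neg h1]

lemma pairFreq_cons_le_succ (c d y : α) (M : List α) :
    pairFreq c d (y :: M) ≤ 1 + pairFreq c d M := by
  cases M with
  | nil => simp [pairFreq]
  | cons u rest =>
    rw [pairFreq_cons_cons]
    by_cases h : y = c ∧ u = d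
    · rw [if_pos h]; exact Nat.add_le_add_left (pairFreq_cons_le c d rest u) 1
    · rw [if_neg h]; exact Nat.le_add_left _ 1

lemma pairFreq_le_count_left (c d : α) : ∀ M : List α, pairFreq c d M ≤ M.count c := by
  refine twoStepInduction (by simp [pairFreq])
    (fun u => by rw [pairFreq_single]; exact Nat.zero_le _) ?_
  intro u v rest ih1 ih2
  rw [pairFreq_cons_cons]
  by_cases h : u = c ∧ v = d
  · rw [if_pos h, List.count_cons, List.count_cons]
    have h1 : (u == c) = true := beq_iff_eq.mpr h.1
    simp only [h1, if_true]
    omega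
  · rw [if_neg h]
    calc pairFreq c d (v :: rest) ≤ (v :: rest).count c := ih2
      _ ≤ (u :: v :: rest).count c := by rw [List.count_cons (b := u)]; omega

lemma pairFreq_le_count_right (c d : α) : ∀ M : List α, pairFreq c d M ≤ M.count d := by
  refine twoStepInduction (by simp [pairFreq])
    (fun u => by rw [pairFreq_single]; exact Nat.zero_le _) ?_
  intro u v rest ih1 ih2
  rw [pairFreq_cons_cons]
  by_cases h : u = c ∧ v = d
  · rw [if_pos h, List.count_cons, List.count_cons]
    have h1 : (v == d) = true := beq_iff_eq.mpr h.2
    simp only [h1, if_true]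
    omega
  · rw [if_neg h]
    calc pairFreq c d (v :: rest) ≤ (v :: rest).count d := ih2
      _ ≤ (u :: v :: rest).count d := by rw [List.count_cons (b := u)]; omega

lemma two_mul_pairFreq_le_length (c d : α) : ∀ M : List α, 2 * pairFreq c d M ≤ M.length := by
  refine twoStepInduction (by simp [pairFreq]) (fun u => by simp [pairFreq]) ?_
  intro u v rest ih1 ih2
  rw [pairFreq_cons_cons]
  by_cases h : u = c ∧ v = d
  · rw [if_pos h]; simp only [List.length_cons]; omega
  · rw [if_neg h]; simp only [List.length_cons] at ih2 ⊢; omega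

lemma replacePair_length (a b x : α) :
    ∀ L : List α, (replacePair a b x L).length + pairFreq a b L = L.length := by
  refine twoStepInduction (by simp [replacePair, pairFreq])
    (fun u => by simp [replacePair, pairFreq]) ?_
  intro u v rest ih1 ih2
  rw [pairFreq_cons_cons]
  by_cases h : u = a ∧ v = b
  · rw [replacePair, if_pos h, if_pos h]
    simp only [List.length_cons] at ih1 ⊢
    omega
  · rw [replacePair, if_neg h, if_neg h]
    simp only [List.length_cons] at ih2 ⊢
    omega

lemma count_replacePair (a b x : α) :
    ∀ L : List α, (replacePair a b x L).count x ≤ pairFreq a b L + L.count x := by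
  refine twoStepInduction (by simp [replacePair, pairFreq])
    (fun u => by simp [replacePair, pairFreq]) ?_
  intro u v rest ih1 ih2
  rw [pairFreq_cons_cons]
  by_cases h : u = a ∧ v = b
  · rw [replacePair, if_pos h, if_pos h]
    simp only [List.count_cons, beq_self_eq_true, if_true]
    omega
  · rw [replacePair, if_neg h, if_neg h]
    rw [List.count_cons, List.count_cons]
    omega

lemma pairFreq_replacePair_le (a b x c d : α) (hc : c ≠ x) (hd : d ≠ x) :
    ∀ L : List α, pairFreq c d (replacePair a b x L) ≤ pairFreq c d L := by
  refine twoStepInduction (by simp [replacePair]) (fun u => by simp [replacePair]) ?_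
  intro u v rest ih1 ih2
  by_cases h : u = a ∧ v = b
  · rw [replacePair, if_pos h]
    have hstrip : pairFreq c d (x :: replacePair a b x rest)
        = pairFreq c d (replacePair a b x rest) := by
      cases hM : replacePair a b x rest with
      | nil => simp [pairFreq]
      | cons w M' =>
        rw [pairFreq_cons_cons]
        have hne : ¬ (x = c ∧ w = d) := by rintro ⟨rfl, _⟩; exact hc rfl
        rw [if_neg hne]
    rw [hstrip]
    calc pairFreq c d (replacePair a b x rest) ≤ pairFreq c d rest := ih1
      _ ≤ pairFreq c d (v :: rest) := pairFreq_cons_le c d rest v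
      _ ≤ pairFreq c d (u :: v :: rest) := pairFreq_cons_le c d _ u
  · rw [replacePair, if_neg h]
    cases hM : replacePair a b x (v :: rest) with
    | nil => simp [pairFreq]
    | cons w M' =>
      rw [pairFreq_cons_cons]
      by_cases hq : u = c ∧ w = d
      · rw [if_pos hq]
        have hwx : w ≠ x := hq.2 ▸ hd
        cases rest with
        | nil =>
          simp only [replacePair] at hM
          obtain ⟨rfl, rfl⟩ := List.cons_eq_cons.mp hM
          rw [pairFreq_cons_cons, if_pos ⟨hq.1, hq.2⟩]
        | cons t rest' =>
          rw [replacePair] at hM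
          by_cases hr : v = a ∧ t = b
          · rw [if_pos hr] at hM
            exact (hwx ((List.cons_eq_cons.mp hM).1.symm)).elim
          · rw [if_neg hr] at hM
            obtain ⟨hv, hM'⟩ := List.cons_eq_cons.mp hM
            rw [pairFreq_cons_cons, if_pos ⟨hq.1, hv.trans hq.2⟩, ← hM']
            exact Nat.add_le_add_left ih1 1
      · rw [if_neg hq, ← hM]
        calc pairFreq c d (replacePair a b x (v :: rest)) ≤ pairFreq c d (v :: rest) := ih2
          _ ≤ pairFreq c d (u :: v :: rest) := pairFreq_cons_le c d _ u

lemma step_bound (a b x c d : α) (L : List α) (hx : x ∉ L)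
    (hmax : ∀ c' d', pairFreq c' d' L ≤ pairFreq a b L) :
    pairFreq c d (replacePair a b x L) ≤ pairFreq a b L := by
  have hcount : (replacePair a b x L).count x ≤ pairFreq a b L := by
    have := count_replacePair a b x L
    rw [List.count_eq_zero_of_not_mem hx] at this
    omega
  by_cases hc : c = x
  · subst hc
    exact le_trans (pairFreq_le_count_left _ _ _) hcount
  · by_cases hd : d = x
    · subst hd
      exact le_trans (pairFreq_le_count_right _ _ _) hcount
    · exact le_trans (pairFreq_replacePair_le a b x c d hc hd L) (hmax c d)

end Aux

/-- After `m` steps of Re-Pair (so `m` nonterminals introduced), if the most frequent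
pair of the working string occurs at least `z` times, then `m < n / z`. -/
theorem stmt13 {α : Type*} [DecidableEq α] (S : List α) (n : ℕ) (hn : n = S.length)
    (m : ℕ) (T : ℕ → List α) (a b x : ℕ → α)
    (h0 : T 0 = S)
    (hstep : ∀ i < m,
      T (i + 1) = replacePair (a i) (b i) (x i) (T i) ∧
      x i ∉ T i ∧
      (∀ c d, pairFreq c d (T i) ≤ pairFreq (a i) (b i) (T i)))
    (z : ℕ) (hz : 0 < z) (hfreq : ∃ c d, z ≤ pairFreq c d (T m)) :
    (m : ℝ) < (n : ℝ) / (z : ℝ) := by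
  -- z is a lower bound for the max frequency at every step
  have key : ∀ k, k ≤ m → ∃ c d, z ≤ pairFreq c d (T (m - k)) := by
    intro k
    induction k with
    | zero => intro _; simpa using hfreq
    | succ k ih =>
      intro hk
      obtain ⟨c, d, hcd⟩ := ih (le_of_lt (Nat.lt_of_succ_le hk))
      set i := m - (k + 1) with hi
      have him : i < m := by omega
      obtain ⟨hT, hxT, hmax⟩ := hstep i him
      have hik : i + 1 = m - k := by omega
      rw [← hik, hT] at hcd
      exact ⟨a i, b i, le_trans hcd (step_bound _ _ _ _ _ _ hxT hmax)⟩
  have zle : ∀ i < m, z ≤ pairFreq (a i) (b i) (T i) := by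
    intro i him
    obtain ⟨c, d, hcd⟩ := key (m - i) (by omega)
    have : m - (m - i) = i := by omega
    rw [this] at hcd
    exact le_trans hcd ((hstep i him).2.2 c d)
  -- length decreases by at least z at each step
  have len : ∀ k, k ≤ m → (T m).length + k * z ≤ (T (m - k)).length := by
    intro k
    induction k with
    | zero => intro _; simp
    | succ k ih =>
      intro hk
      have hk' := ih (le_of_lt (Nat.lt_of_succ_le hk))
      set i := m - (k + 1) with hi
      have him : i < m := by omega
      obtain ⟨hT, hxT, hmax⟩ := hstep i him
      have hik : i + 1 = m - k := by omega
      have hlen : (T (i + 1)).length + pairFreq (a i) (b i) (T i) = (T i).length := by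
        rw [hT]; exact replacePair_length _ _ _ _
      have hzi := zle i him
      rw [hik] at hlen
      calc (T m).length + (k + 1) * z = (T m).length + k * z + z := by ring
        _ ≤ (T (m - k)).length + z := by omega
        _ ≤ (T (m - k)).length + pairFreq (a i) (b i) (T i) := by omega
        _ = (T i).length := by omega
  have h2z : 2 * z ≤ (T m).length := by
    obtain ⟨c, d, hcd⟩ := hfreq
    calc 2 * z ≤ 2 * pairFreq c d (T m) := by omega
      _ ≤ (T m).length := two_mul_pairFreq_le_length c d (T m)
  have hmain : m * z < n := by
    have := len m le_rfl
    simp only [Nat.sub_self] at this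
    rw [h0] at this
    omega
  have hzR : (0 : ℝ) < (z : ℝ) := by exact_mod_cast hz
  rw [lt_div_iff₀ hzR]
  exact_mod_cast hmain
end

section
/- For every k > 0 and p ≥ 1 there exists a string S over an alphabet of size σ = 4^p and length σ^{k+1/2} such that: (1) every word w of length i < k satisfies |S|^↻_w = σ^{k-i+1/2}; (2) every word w of length k occurring in S satisfies |S|^↻_w = σ^{1/2}; (3) no word of length k+1 occurs cyclically more than once in S. -/
/-- Number of cyclic occurrences of `v` in `S` (occurrences may wrap around the end). -/
def occCyc {α : Type*} [DecidableEq α] (S v : List α) : ℕ :=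
  ((List.range S.length).filter (fun i => ((S ++ S).drop i).take v.length = v)).length

section Euler
set_option linter.unusedSectionVars false
variable {V : Type*} [DecidableEq V]

/-- cyclic edge list of a circuit -/
def cycE (c : List V) : List (V × V) := c.zip (c.rotate 1)

lemma length_cycE (c : List V) : (cycE c).length = c.length := by
  simp [cycE]

lemma map_fst_cycE (c : List V) : (cycE c).map Prod.fst = c :=
  List.map_fst_zip (by simp)

lemma map_snd_cycE (c : List V) : (cycE c).map Prod.snd = c.rotate 1 :=
  List.map_snd_zip (by simp)

lemma fst_mem_of_mem_cycE {c : List V} {e : V × V} (he : e ∈ cycE c) : e.1 ∈ c := by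
  have : e.1 ∈ (cycE c).map Prod.fst := List.mem_map_of_mem he
  rwa [map_fst_cycE] at this

lemma snd_mem_of_mem_cycE {c : List V} {e : V × V} (he : e ∈ cycE c) : e.2 ∈ c := by
  have : e.2 ∈ (cycE c).map Prod.snd := List.mem_map_of_mem he
  rw [map_snd_cycE] at this
  exact (List.rotate_perm c 1).subset this

lemma getElem_cycE (c : List V) (i : ℕ) (hi : i < c.length)
    (hm : (i+1) % c.length < c.length) (h : i < (cycE c).length) :
    (cycE c)[i] = (c.get ⟨i, hi⟩, c.get ⟨(i+1) % c.length, hm⟩) := by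
  simp only [cycE, List.getElem_zip, List.getElem_rotate, List.get_eq_getElem]

lemma countP_fst_cycE (c : List V) (v : V) :
    (cycE c).countP (fun e => e.1 = v) = c.count v := by
  have : (cycE c).countP (fun e => e.1 = v)
      = ((cycE c).map Prod.fst).countP (fun x => x = v) := by
    rw [List.countP_map]; rfl
  rw [this, map_fst_cycE, List.count]
  apply List.countP_congr
  intro x _
  simp

lemma countP_snd_cycE (c : List V) (v : V) :
    (cycE c).countP (fun e => e.2 = v) = c.count v := by
  have : (cycE c).countP (fun e => e.2 = v)
      = ((cycE c).map Prod.snd).countP (fun x => x = v) := by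
    rw [List.countP_map]; rfl
  rw [this, map_snd_cycE]
  have := (List.rotate_perm c 1).countP_eq (fun x => x = v)
  rw [this, List.count]
  apply List.countP_congr
  intro x _
  simp

end Euler

section Euler2
set_option linter.unusedSectionVars false
variable {V : Type*} [DecidableEq V]

def pathEdges (l : List V) : List (V × V) := l.zip l.tail

lemma pathEdges_cons_cons (a b : V) (l : List V) :
    pathEdges (a :: b :: l) = (a, b) :: pathEdges (b :: l) := rfl

lemma pathEdges_append (xs : List V) (y : V) (ys : List V) :
    pathEdges (xs ++ y :: ys) = pathEdges (xs ++ [y]) ++ pathEdges (y :: ys) := by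
  induction xs with
  | nil => simp [pathEdges]
  | cons a xs ih =>
    cases xs with
    | nil => simp [pathEdges_cons_cons, pathEdges]
    | cons b xs =>
      simp only [List.cons_append, pathEdges_cons_cons] at *
      rw [ih]

lemma zip_append_left {α β : Type*} (m : List β) (l : List α) (ex : List α)
    (h : m.length ≤ l.length) : (l ++ ex).zip m = l.zip m := by
  induction m generalizing l with
  | nil => simp
  | cons y m ih =>
    cases l with
    | nil => simp at h
    | cons x l =>
      simp only [List.cons_append, List.zip_cons_cons]
      rw [ih l (by simpa using h)]

lemma cycE_cons (v : V) (a : List V) :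
    cycE (v :: a) = pathEdges (v :: a ++ [v]) := by
  have h1 : (v :: a).rotate 1 = a ++ [v] := by
    rw [List.rotate_cons_succ, List.rotate_zero]
  have : pathEdges (v :: a ++ [v]) = ((v :: a) ++ [v]).zip (a ++ [v]) := by
    simp [pathEdges]
  rw [this, zip_append_left (a ++ [v]) (v :: a) [v] (by simp), cycE, h1]

lemma zip_rotate_one {α β : Type*} (l : List α) (l' : List β) (h : l.length = l'.length) :
    (l.rotate 1).zip (l'.rotate 1) = (l.zip l').rotate 1 := by
  cases l with
  | nil => cases l' with
    | nil => simp
    | cons y ys => simp at h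
  | cons x xs =>
    cases l' with
    | nil => simp at h
    | cons y ys =>
      simp only [List.rotate_cons_succ, List.rotate_zero, List.zip_cons_cons]
      rw [List.zip_append (by simpa using h)]
      simp

lemma cycE_rotate (c : List V) (n : ℕ) : cycE (c.rotate n) = (cycE c).rotate n := by
  induction n with
  | zero => simp
  | succ n ih =>
    have h1 : c.rotate (n + 1) = (c.rotate n).rotate 1 := by
      rw [List.rotate_rotate]
    have h2 : (cycE c).rotate (n + 1) = ((cycE c).rotate n).rotate 1 := by
      rw [List.rotate_rotate]
    rw [h1, h2, ← ih, cycE, cycE,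
      zip_rotate_one _ _ (by simp)]

lemma cycE_rotate_perm (c : List V) (n : ℕ) : (cycE (c.rotate n)).Perm (cycE c) := by
  rw [cycE_rotate]; exact List.rotate_perm _ _

lemma exists_rotate_head {v : V} {c : List V} (h : v ∈ c) :
    ∃ t, ∃ n, c.rotate n = v :: t := by
  obtain ⟨s, t, rfl⟩ := List.append_of_mem h
  refine ⟨t ++ s, s.length, ?_⟩
  rw [List.rotate_eq_drop_append_take (by simp)]
  simp

lemma cycE_merge (v : V) (a b : List V) :
    cycE (v :: a ++ v :: b) = cycE (v :: a) ++ cycE (v :: b) := by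
  have hl : (v :: a) ++ (v :: b) = v :: (a ++ v :: b) := by simp
  rw [hl, cycE_cons v (a ++ v :: b), cycE_cons v a, cycE_cons v b]
  have : v :: (a ++ v :: b) ++ [v] = (v :: a) ++ (v :: (b ++ [v])) := by simp
  rw [this, pathEdges_append (v :: a) v (b ++ [v])]
  simp

end Euler2

section Euler3
set_option linter.unusedSectionVars false
variable {V : Type*} [DecidableEq V] [Fintype V]

def outS (E : Finset (V × V)) (v : V) : Finset (V × V) := E.filter (fun e => e.1 = v)
def inS (E : Finset (V × V)) (v : V) : Finset (V × V) := E.filter (fun e => e.2 = v)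

lemma exists_out {E : Finset (V × V)} (hbal : ∀ v, (outS E v).card = (inS E v).card)
    {u v : V} (huv : (u, v) ∈ E) : ∃ w, (v, w) ∈ E := by
  have h1 : (inS E v).Nonempty := ⟨(u, v), by simp [inS, huv]⟩
  have h2 : (outS E v).Nonempty := Finset.card_pos.mp (by
    rw [hbal]; exact Finset.card_pos.mpr h1)
  obtain ⟨e, he⟩ := h2
  simp only [outS, Finset.mem_filter] at he
  exact ⟨e.2, by rw [← he.2]; exact he.1⟩

lemma exists_cycle {E : Finset (V × V)} (hbal : ∀ v, (outS E v).card = (inS E v).card)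
    (hne : E.Nonempty) : ∃ c : List V, c ≠ [] ∧ c.Nodup ∧ ∀ e ∈ cycE c, e ∈ E := by
  classical
  obtain ⟨⟨a, b⟩, hab⟩ := hne
  let nxt : V → V := fun v => if h : ∃ w, (v, w) ∈ E then h.choose else v
  let g : ℕ → V := fun n => nxt^[n] b
  have hg0 : g 0 = b := rfl
  have hgstep : ∀ n, (∃ u, (u, g n) ∈ E) → (g n, g (n+1)) ∈ E ∧ (∃ u, (u, g (n+1)) ∈ E) := by
    intro n ⟨u, hu⟩
    have hex : ∃ w, (g n, w) ∈ E := exists_out hbal hu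
    have : g (n+1) = nxt (g n) := Function.iterate_succ_apply' nxt n b
    rw [this]
    have hnxt : nxt (g n) = hex.choose := dif_pos hex
    rw [hnxt]
    exact ⟨hex.choose_spec, ⟨g n, hex.choose_spec⟩⟩
  have hgE : ∀ n, (g n, g (n+1)) ∈ E := by
    have key : ∀ n, (g n, g (n+1)) ∈ E ∧ (∃ u, (u, g (n+1)) ∈ E) := by
      intro n
      induction n with
      | zero => exact hgstep 0 ⟨a, by rwa [hg0]⟩
      | succ m ih => exact hgstep (m+1) ih.2
    exact fun n => (key n).1
  -- pigeonhole
  have hcard : Fintype.card V < Fintype.card (Fin (Fintype.card V + 1)) := by simp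
  obtain ⟨i, j, hij, hgij⟩ := Fintype.exists_ne_map_eq_of_card_lt
    (fun i : Fin (Fintype.card V + 1) => g i) hcard
  have hex : ∃ d, 0 < d ∧ ∃ i, g i = g (i + d) := by
    rcases Nat.lt_or_ge i.val j.val with h | h
    · exact ⟨j.val - i.val, by omega, i.val, by rw [hgij]; congr 1; omega⟩
    · have : j.val < i.val := lt_of_le_of_ne h (fun hh => hij (Fin.ext hh.symm))
      exact ⟨i.val - j.val, by omega, j.val, by rw [← hgij]; congr 1; omega⟩
  let d₀ := Nat.find hex
  obtain ⟨hd₀pos, i₀, hi₀⟩ : 0 < d₀ ∧ ∃ i, g i = g (i + d₀) := Nat.find_spec hex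
  let c : List V := (List.range d₀).map (fun t => g (i₀ + t))
  have hclen : c.length = d₀ := by simp [c]
  have hcget : ∀ t (h : t < c.length), c.get ⟨t, h⟩ = g (i₀ + t) := by
    intro t h
    simp [c]
  have hnodup : c.Nodup := by
    rw [List.nodup_iff_injective_get]
    rintro ⟨s, hs⟩ ⟨t, ht⟩ hst
    rw [hcget s hs, hcget t ht] at hst
    by_contra hne'
    have hne'' : s ≠ t := fun h => hne' (by simpa using h)
    -- wlog s < t
    rcases Nat.lt_or_ge s t with h | h
    · exact Nat.find_min hex (m := t - s) (by omega)
        ⟨by omega, i₀ + s, by rw [hst]; congr 1; omega⟩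
    · have hts : t < s := by omega
      exact Nat.find_min hex (m := s - t) (by omega)
        ⟨by omega, i₀ + t, by rw [← hst]; congr 1; omega⟩
  refine ⟨c, by simp [c]; omega, hnodup, ?_⟩
  intro e he
  obtain ⟨⟨tv, htv⟩, rfl⟩ := List.mem_iff_get.mp he
  have ht' : tv < c.length := by
    have h2 := htv; rw [length_cycE] at h2; exact h2
  have hmod : (tv + 1) % c.length < c.length := Nat.mod_lt _ (by omega)
  have hkey := getElem_cycE c tv ht' hmod htv
  have hgetE : (cycE c).get ⟨tv, htv⟩ = (cycE c)[tv] := by simp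
  rw [hgetE, hkey, hcget _ ht', hcget _ hmod]
  rcases Nat.lt_or_ge (tv + 1) c.length with hlt | hge
  · rw [Nat.mod_eq_of_lt hlt]
    exact hgE (i₀ + tv)
  · have heq : (tv + 1) % c.length = 0 := by
      have : tv + 1 = c.length := by omega
      rw [this, Nat.mod_self]
    rw [heq]
    have h3 : g (i₀ + 0) = g (i₀ + tv + 1) := by
      rw [Nat.add_zero, hi₀]
      congr 1
      omega
    rw [h3]
    exact hgE (i₀ + tv)

end Euler3

section Euler4
set_option linter.unusedSectionVars false
variable {V : Type*} [DecidableEq V] [Fintype V]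

lemma cycE_nodup_of_nodup {c : List V} (h : c.Nodup) : (cycE c).Nodup := by
  have : ((cycE c).map Prod.fst).Nodup := by rwa [map_fst_cycE]
  exact this.of_map _

lemma decomp_aux : ∀ (n : ℕ) (E : Finset (V × V)),
    E.card = n → (∀ v, (outS E v).card = (inS E v).card) →
    ∃ L : List (List V), (∀ c ∈ L, c ≠ []) ∧
      (L.map (fun c => ((cycE c : List (V × V)) : Multiset (V × V)))).sum = E.val := by
  classical
  intro n
  induction n using Nat.strong_induction_on with
  | _ n ih =>
  intro E hn hbal
  rcases Finset.eq_empty_or_nonempty E with rfl | hne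
  · exact ⟨[], by simp, by simp⟩
  obtain ⟨c, hcne, hcnodup, hcE⟩ := exists_cycle hbal hne
  have hEnodup : ((cycE c : List (V × V)) : Multiset (V × V)).Nodup := by
    exact_mod_cast cycE_nodup_of_nodup hcnodup
  have hle : ((cycE c : List (V × V)) : Multiset (V × V)) ≤ E.val := by
    rw [Multiset.le_iff_count]
    intro e
    by_cases he : e ∈ cycE c
    · have h1 : Multiset.count e ((cycE c : List (V × V)) : Multiset (V × V)) ≤ 1 :=
        Multiset.nodup_iff_count_le_one.mp hEnodup e
      have h2 : 1 ≤ Multiset.count e E.val := by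
        rw [Nat.one_le_iff_ne_zero, ← Nat.pos_iff_ne_zero, Multiset.count_pos]
        exact hcE e he
      omega
    · have : Multiset.count e ((cycE c : List (V × V)) : Multiset (V × V)) = 0 := by
        rw [Multiset.count_eq_zero]
        simpa using he
      omega
  set C : Finset (V × V) := ⟨(cycE c : Multiset (V × V)), hEnodup⟩ with hC
  have hCval : C.val = (cycE c : Multiset (V × V)) := rfl
  have hCsub : C ⊆ E := by
    intro e he
    exact hcE e (by simpa [hC, Finset.mem_def] using he)
  set E' : Finset (V × V) := E \ C with hE'
  have hE'val : E'.val = E.val - C.val := Finset.sdiff_val _ _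
  have hsum : E'.val + C.val = E.val := by
    rw [hE'val]
    exact tsub_add_cancel_of_le (by rw [hCval]; exact hle)
  have hCcard : C.card ≠ 0 := by
    simp only [Finset.card, hCval]
    simpa [length_cycE] using hcne
  have hcard' : E'.card < E.card := by
    have := Finset.card_sdiff_of_subset hCsub
    have h2 := Finset.card_le_card hCsub
    rw [← hE'] at this
    omega
  -- balance of E'
  have hbal' : ∀ v, (outS E' v).card = (inS E' v).card := by
    intro v
    have hofilt : outS E' v = outS E v \ outS C v := by
      simp only [outS, hE']
      ext e
      simp only [Finset.mem_filter, Finset.mem_sdiff]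
      tauto
    have hifilt : inS E' v = inS E v \ inS C v := by
      simp only [inS, hE']
      ext e
      simp only [Finset.mem_filter, Finset.mem_sdiff]
      tauto
    have ho : (outS E' v).card = (outS E v).card - (outS C v).card := by
      rw [hofilt]
      exact Finset.card_sdiff_of_subset (Finset.filter_subset_filter _ hCsub)
    have hi : (inS E' v).card = (inS E v).card - (inS C v).card := by
      rw [hifilt]
      exact Finset.card_sdiff_of_subset (Finset.filter_subset_filter _ hCsub)
    have hoC : (outS C v).card = c.count v := by
      have h1 : (outS C v).card = Multiset.countP (fun e => e.1 = v) C.val := by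
        simp only [outS, Finset.filter, Finset.card, Multiset.countP_eq_card_filter]
      rw [h1, hCval, Multiset.coe_countP]
      exact countP_fst_cycE c v
    have hiC : (inS C v).card = c.count v := by
      have h1 : (inS C v).card = Multiset.countP (fun e => e.2 = v) C.val := by
        simp only [inS, Finset.filter, Finset.card, Multiset.countP_eq_card_filter]
      rw [h1, hCval, Multiset.coe_countP]
      exact countP_snd_cycE c v
    rw [ho, hi, hbal v, hoC, hiC]
  obtain ⟨L, hL1, hL2⟩ := ih E'.card (by omega) E' rfl hbal'
  refine ⟨c :: L, ?_, ?_⟩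
  · intro d hd
    rcases hd with _ | hd
    · exact hcne
    · exact hL1 _ (by assumption)
  · simp only [List.map_cons, List.sum_cons]
    rw [hL2, ← hCval, add_comm, hsum]

end Euler4

section Euler5
set_option linter.unusedSectionVars false
variable {V : Type*} [DecidableEq V] [Fintype V]

theorem my_perm_cons_erase {β : Type*} [BEq β] [LawfulBEq β] {a : β} {l : List β}
    (h : a ∈ l) : l.Perm (a :: l.erase a) := by
  induction l with
  | nil => cases h
  | cons x xs ih =>
    by_cases hxa : x = a
    · subst hxa
      rw [List.erase_cons_head]
    · rw [List.erase_cons_tail (by simpa using hxa)]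
      have ha : a ∈ xs := by
        rcases List.mem_cons.mp h with h1 | h1
        · exact absurd h1.symm hxa
        · exact h1
      exact ((ih ha).cons x).trans (List.Perm.swap a x _)

lemma mem_sum_map {β : Type*} [DecidableEq β] {e : β} {L : List (List V)}
    {f : List V → Multiset β} (h : e ∈ (L.map f).sum) : ∃ c ∈ L, e ∈ f c := by
  induction L with
  | nil => simp at h
  | cons a L ih =>
    simp only [List.map_cons, List.sum_cons, Multiset.mem_add] at h
    rcases h with h | h
    · exact ⟨a, by simp, h⟩
    · obtain ⟨c, hc, hec⟩ := ih h
      exact ⟨c, by simp [hc], hec⟩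

lemma merge_two {c₁ c₂ : List V} {v : V} (h₁ : v ∈ c₁) (h₂ : v ∈ c₂) :
    ∃ m : List V, m ≠ [] ∧ (cycE m).Perm (cycE c₁ ++ cycE c₂) := by
  obtain ⟨t₁, n₁, hr₁⟩ := exists_rotate_head h₁
  obtain ⟨t₂, n₂, hr₂⟩ := exists_rotate_head h₂
  refine ⟨(v :: t₁) ++ (v :: t₂), by simp, ?_⟩
  rw [cycE_merge v t₁ t₂]
  have p₁ : (cycE (v :: t₁)).Perm (cycE c₁) := by rw [← hr₁]; exact cycE_rotate_perm c₁ n₁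
  have p₂ : (cycE (v :: t₂)).Perm (cycE c₂) := by rw [← hr₂]; exact cycE_rotate_perm c₂ n₂
  exact p₁.append p₂

lemma mergeAll : ∀ (N : ℕ) (L : List (List V)) (E : Finset (V × V)),
    L.length = N → L ≠ [] → (∀ c ∈ L, c ≠ []) →
    (L.map (fun c => ((cycE c : List (V × V)) : Multiset (V × V)))).sum = E.val →
    (∀ a b : V, Relation.ReflTransGen (fun x y => (x, y) ∈ E) a b) →
    ∃ c : List V, c ≠ [] ∧ ((cycE c : List (V × V)) : Multiset (V × V)) = E.val := by
  classical
  intro N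
  induction N using Nat.strong_induction_on with
  | _ N ih =>
  intro L E hN hLne hmem hsum hconn
  match L, hLne with
  | [c], _ =>
    refine ⟨c, hmem c (by simp), ?_⟩
    simpa using hsum
  | c₁ :: c₂ :: rest, _ =>
    set L := c₁ :: c₂ :: rest with hL
    by_cases hbad : ∃ d₁ ∈ L, ∃ d₂ ∈ L.erase d₁, ∃ v, v ∈ d₁ ∧ v ∈ d₂
    · obtain ⟨d₁, hd₁, d₂, hd₂, v, hv₁, hv₂⟩ := hbad
      obtain ⟨m, hmne, hmperm⟩ := merge_two hv₁ hv₂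
      have perm1 : L.Perm (d₁ :: L.erase d₁) := my_perm_cons_erase hd₁
      have perm2 : (L.erase d₁).Perm (d₂ :: (L.erase d₁).erase d₂) := my_perm_cons_erase hd₂
      set rest' := (L.erase d₁).erase d₂ with hrest'
      have permL : L.Perm (d₁ :: d₂ :: rest') := perm1.trans (perm2.cons d₁)
      set f : List V → Multiset (V × V) := fun c => ((cycE c : List (V × V)) : Multiset (V × V)) with hf
      have hsum' : ((d₁ :: d₂ :: rest').map f).sum = E.val := by
        rw [← hsum]
        exact ((permL.map f).sum_eq).symm
      have hmsum : f m = f d₁ + f d₂ := by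
        simp only [hf]
        rw [Multiset.coe_eq_coe.mpr hmperm]
        simp
      have hsum'' : ((m :: rest').map f).sum = E.val := by
        simp only [List.map_cons, List.sum_cons] at hsum' ⊢
        rw [hmsum, add_assoc]
        exact hsum'
      have hlen : (m :: rest').length < N := by
        have h1 : (L.erase d₁).length = L.length - 1 := List.length_erase_of_mem hd₁
        have h2 : rest'.length = (L.erase d₁).length - 1 := List.length_erase_of_mem hd₂
        have h3 : 2 ≤ L.length := by simp [hL]
        simp only [List.length_cons]
        omega
      refine ih _ hlen (m :: rest') E rfl (by simp) ?_ hsum'' hconn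
      intro c hc
      rcases hc with _ | hc
      · exact hmne
      · have : c ∈ L := by
          have h1 : c ∈ L.erase d₁ := (L.erase d₁).erase_subset (by assumption)
          exact L.erase_subset h1
        exact hmem c this
    · exfalso
      have hc₁ : c₁ ∈ L := by simp [hL]
      have hc₂ : c₂ ∈ L.erase c₁ := by
        by_cases h : c₂ = c₁
        · subst h
          have : L.erase c₂ = c₂ :: rest := by simp [hL]
          rw [this]; simp
        · have : c₂ ∈ L := by simp [hL]
          exact (List.mem_erase_of_ne h).mpr this
      have hc₁ne : c₁ ≠ [] := hmem c₁ hc₁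
      have hc₂ne : c₂ ≠ [] := hmem c₂ (by simp [hL])
      have claim : ∀ x, Relation.ReflTransGen (fun x y => (x, y) ∈ E) (c₁.head hc₁ne) x →
          x ∈ c₁ := by
        intro x hx
        induction hx with
        | refl => exact List.head_mem hc₁ne
        | tail hab hbx ihx =>
          rename_i b x'
          have hmem' : (b, x') ∈ E.val := hbx
          rw [← hsum] at hmem'
          obtain ⟨d, hd, hed⟩ := mem_sum_map hmem'
          have hed' : (b, x') ∈ cycE d := by exact_mod_cast hed
          have hbd : b ∈ d := fst_mem_of_mem_cycE hed'
          have hxd : x' ∈ d := snd_mem_of_mem_cycE hed'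
          by_cases hdc : d = c₁
          · rwa [hdc] at hxd
          · exact absurd ⟨c₁, hc₁, d, (List.mem_erase_of_ne hdc).mpr hd, b, ihx, hbd⟩ hbad
      have hv₂ : c₂.head hc₂ne ∈ c₁ := claim _ (hconn _ _)
      exact hbad ⟨c₁, hc₁, c₂, hc₂, c₂.head hc₂ne, hv₂, List.head_mem hc₂ne⟩

theorem euler_circuit (E : Finset (V × V))
    (hbal : ∀ v, (outS E v).card = (inS E v).card)
    (hconn : ∀ a b : V, Relation.ReflTransGen (fun x y => (x, y) ∈ E) a b)
    (hne : E.Nonempty) :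
    ∃ c : List V, c ≠ [] ∧ ((cycE c : List (V × V)) : Multiset (V × V)) = E.val := by
  obtain ⟨L, hL1, hL2⟩ := decomp_aux E.card E rfl hbal
  have hLne : L ≠ [] := by
    rintro rfl
    simp at hL2
    obtain ⟨e, he⟩ := hne
    have : e ∈ E.val := he
    rw [← hL2] at this
    simp at this
  exact mergeAll L.length L E rfl hLne hL1 hL2 hconn

end Euler5

section Dbj
set_option linter.unusedSectionVars false

variable (k p : ℕ)

def eqvP : Fin (4 ^ p) ≃ Fin (2 ^ p) × Fin (2 ^ p) :=
  (finCongr (by rw [← mul_pow]; norm_num) : Fin (4 ^ p) ≃ Fin (2 ^ p * 2 ^ p)).trans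
    finProdFinEquiv.symm

def zP : Fin (4 ^ p) := ⟨0, pow_pos (by norm_num) p⟩

abbrev VV := List.Vector (Fin (4 ^ p)) k

def hdV (u : VV k p) : Fin (4 ^ p) := u.1.headD (zP p)
def lstV (u : VV k p) : Fin (4 ^ p) := u.1.getLastD (zP p)

def Ecfg : Finset (VV k p × VV k p) :=
  Finset.univ.filter (fun e => e.1.1.tail = e.2.1.dropLast ∧
    (eqvP p (lstV k p e.2)).1 = (eqvP p (hdV k p e.1)).2)

variable {k p}

lemma vne (hk : 0 < k) (u : VV k p) : u.1 ≠ [] := by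
  intro h
  have := u.2
  rw [h] at this
  simp at this
  omega

lemma headD_eq_head {β : Type*} (l : List β) (d : β) (h : l ≠ []) :
    l.headD d = l.head h := by
  cases l with
  | nil => exact absurd rfl h
  | cons a t => rfl

lemma hdV_eq (hk : 0 < k) (u : VV k p) : hdV k p u = u.1.head (vne hk u) :=
  headD_eq_head _ _ _

lemma lstV_eq (hk : 0 < k) (u : VV k p) : lstV k p u = u.1.getLast (vne hk u) := by
  unfold lstV
  rw [List.getLastD_eq_getLast?, List.getLast?_eq_getLast (vne hk u)]
  rfl

/-- the successor vertex along an edge -/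
def shiftV (hk : 0 < k) (u : VV k p) (x : Fin (4 ^ p)) : VV k p :=
  ⟨u.1.tail ++ [x], by
    have h2 := u.2
    simp [List.length_tail, h2]
    omega⟩

lemma mem_Ecfg_iff {u v : VV k p} :
    (u, v) ∈ Ecfg k p ↔ u.1.tail = v.1.dropLast ∧
      (eqvP p (lstV k p v)).1 = (eqvP p (hdV k p u)).2 := by
  simp [Ecfg]

lemma edge_shape (hk : 0 < k) {u v : VV k p} (h : (u, v) ∈ Ecfg k p) :
    v = shiftV hk u (lstV k p v) ∧ (eqvP p (lstV k p v)).1 = (eqvP p (hdV k p u)).2 := by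
  rw [mem_Ecfg_iff] at h
  obtain ⟨h1, h2⟩ := h
  refine ⟨?_, h2⟩
  apply Subtype.ext
  show v.1 = u.1.tail ++ [lstV k p v]
  rw [h1, lstV_eq hk v]
  exact (List.dropLast_append_getLast (vne hk v)).symm

lemma shape_edge (hk : 0 < k) (u : VV k p) (x : Fin (4 ^ p))
    (hx : (eqvP p x).1 = (eqvP p (hdV k p u)).2) : (u, shiftV hk u x) ∈ Ecfg k p := by
  rw [mem_Ecfg_iff]
  have hlst : lstV k p (shiftV hk u x) = x := by
    rw [lstV_eq hk]
    show (u.1.tail ++ [x]).getLast _ = x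
    exact List.getLast_concat
  constructor
  · show u.1.tail = (u.1.tail ++ [x]).dropLast
    simp
  · rw [hlst, hx]

lemma shiftV_inj (hk : 0 < k) (u : VV k p) {x y : Fin (4 ^ p)}
    (h : shiftV hk u x = shiftV hk u y) : x = y := by
  have := congrArg (fun v : VV k p => v.1) h
  simpa [shiftV] using this


def outFn (hk : 0 < k) (u : VV k p) (b : Fin (2 ^ p)) : VV k p × VV k p :=
  (u, shiftV hk u ((eqvP p).symm ((eqvP p (hdV k p u)).2, b)))

lemma outdeg (hk : 0 < k) (u : VV k p) : (outS (Ecfg k p) u).card = 2 ^ p := by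
  have himg : outS (Ecfg k p) u = Finset.image (outFn hk u) Finset.univ := by
    ext e
    simp only [outS, Finset.mem_filter, Finset.mem_image, Finset.mem_univ, true_and]
    constructor
    · rintro ⟨heE, h1⟩
      obtain ⟨u', v⟩ := e
      cases h1
      obtain ⟨hsh, hcond⟩ := edge_shape hk heE
      refine ⟨(eqvP p (lstV k p v)).2, ?_⟩
      unfold outFn
      have hz : (eqvP p).symm ((eqvP p (hdV k p u')).2, (eqvP p (lstV k p v)).2) = lstV k p v := by
        rw [← hcond]
        simp
      rw [hz, ← hsh]
    · rintro ⟨b, rfl⟩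
      exact ⟨shape_edge hk u _ (by simp), rfl⟩
  rw [himg, Finset.card_image_of_injective _ ?_, Finset.card_univ, Fintype.card_fin]
  intro b₁ b₂ hb
  unfold outFn at hb
  have := shiftV_inj hk u (congrArg Prod.snd hb)
  have := (eqvP p).symm.injective this
  simpa using this

def inFn (hk : 0 < k) (v : VV k p) (a : Fin (2 ^ p)) : VV k p × VV k p :=
  (⟨(eqvP p).symm (a, (eqvP p (lstV k p v)).1) :: v.1.dropLast, by
    have h2 := v.2
    simp [List.length_dropLast, h2]
    omega⟩, v)

lemma indeg (hk : 0 < k) (v : VV k p) : (inS (Ecfg k p) v).card = 2 ^ p := by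
  have hdinFn : ∀ a, hdV k p (inFn hk v a).1 = (eqvP p).symm (a, (eqvP p (lstV k p v)).1) := by
    intro a
    rfl
  have himg : inS (Ecfg k p) v = Finset.image (inFn hk v) Finset.univ := by
    ext e
    simp only [inS, Finset.mem_filter, Finset.mem_image, Finset.mem_univ, true_and]
    constructor
    · rintro ⟨heE, h1⟩
      obtain ⟨u, v'⟩ := e
      cases h1
      rw [mem_Ecfg_iff] at heE
      obtain ⟨h1, h2⟩ := heE
      refine ⟨(eqvP p (hdV k p u)).1, ?_⟩
      unfold inFn
      ext1
      · apply Subtype.ext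
        show (eqvP p).symm ((eqvP p (hdV k p u)).1, (eqvP p (lstV k p v')).1) :: v'.1.dropLast = u.1
        rw [h2]
        have hu : u.1 = hdV k p u :: u.1.tail := by
          rw [hdV_eq hk u]
          exact (List.cons_head_tail _).symm
        conv_rhs => rw [hu, h1]
        congr 1
        simp
      · rfl
    · rintro ⟨a, rfl⟩
      have hh := hdinFn a
      have hmem : ((inFn hk v a).1, v) ∈ Ecfg k p := by
        rw [mem_Ecfg_iff]
        refine ⟨rfl, ?_⟩
        rw [hh]
        simp
      exact ⟨hmem, rfl⟩
  rw [himg, Finset.card_image_of_injective _ ?_, Finset.card_univ, Fintype.card_fin]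
  intro a₁ a₂ hb
  have h1 := congrArg (fun e : VV k p × VV k p => e.1.1) hb
  simp only [inFn] at h1
  have h2 : (eqvP p).symm (a₁, (eqvP p (lstV k p v)).1) = (eqvP p).symm (a₂, (eqvP p (lstV k p v)).1) := by
    exact List.head_eq_of_cons_eq h1
  have := (eqvP p).symm.injective h2
  simpa using this

lemma Ecfg_bal (hk : 0 < k) :
    ∀ v, (outS (Ecfg k p) v).card = (inS (Ecfg k p) v).card := by
  intro v
  rw [outdeg hk v, indeg hk v]

lemma reach_compat (hk : 0 < k) (u v : VV k p)
    (h : ∀ j (hj : j < k),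
      (eqvP p (v.1.get ⟨j, by rw [v.2]; exact hj⟩)).1 =
      (eqvP p (u.1.get ⟨j, by rw [u.2]; exact hj⟩)).2) :
    Relation.ReflTransGen (fun x y => (x, y) ∈ Ecfg k p) u v := by
  have hlen : ∀ j, j ≤ k → (u.1.drop j ++ v.1.take j).length = k := by
    intro j hj
    have h1 := u.2
    have h2 := v.2
    simp [h1, h2]
    omega
  have key : ∀ j (hj : j ≤ k),
      Relation.ReflTransGen (fun x y => (x, y) ∈ Ecfg k p) u ⟨u.1.drop j ++ v.1.take j, hlen j hj⟩ := by
    intro j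
    induction j with
    | zero =>
      intro _
      have : (⟨u.1.drop 0 ++ v.1.take 0, hlen 0 (by omega)⟩ : VV k p) = u := by
        apply Subtype.ext
        simp
      rw [this]
    | succ j ih =>
      intro hj
      have hjk : j < k := by omega
      have hdrne : u.1.drop j ≠ [] := by
        intro hc
        have hlc := congrArg List.length hc
        simp [u.2] at hlc
        omega
      set wj : VV k p := ⟨u.1.drop j ++ v.1.take j, hlen j (by omega)⟩ with hwj
      have hwjne := vne hk wj
      have hhd : hdV k p wj = u.1.get ⟨j, by rw [u.2]; exact hjk⟩ := by
        rw [hdV_eq hk wj]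
        show (u.1.drop j ++ v.1.take j).head _ = _
        rw [List.head_append_of_ne_nil hdrne, List.head_eq_getElem, List.getElem_drop]
        simp
      have hstep : shiftV hk wj (v.1.get ⟨j, by rw [v.2]; exact hjk⟩) =
          ⟨u.1.drop (j+1) ++ v.1.take (j+1), hlen (j+1) hj⟩ := by
        apply Subtype.ext
        show wj.1.tail ++ [_] = _
        rw [hwj]
        show (u.1.drop j ++ v.1.take j).tail ++ _ = _
        rw [List.tail_append_of_ne_nil hdrne, List.tail_drop, List.append_assoc]
        congr 1
        have : j < v.1.length := by rw [v.2]; exact hjk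
        rw [← List.take_concat_get' v.1 j this]
        rfl
      have hedge : (wj, shiftV hk wj (v.1.get ⟨j, by rw [v.2]; exact hjk⟩)) ∈ Ecfg k p := by
        apply shape_edge hk
        rw [hhd]
        exact h j hjk
      rw [hstep] at hedge
      exact (ih (by omega)).tail hedge
  have := key k (le_refl k)
  have heq : (⟨u.1.drop k ++ v.1.take k, hlen k (le_refl k)⟩ : VV k p) = v := by
    apply Subtype.ext
    have h1 := u.2
    have h2 := v.2
    show u.1.drop k ++ v.1.take k = v.1
    have e1 : u.1.drop k = [] := List.drop_eq_nil_of_le (by rw [h1])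
    have e2 : v.1.take k = v.1 := List.take_of_length_le (by rw [h2])
    rw [e1, e2]
    simp
  rwa [heq] at this

lemma Ecfg_conn (hk : 0 < k) (u v : VV k p) :
    Relation.ReflTransGen (fun x y => (x, y) ∈ Ecfg k p) u v := by
  have hmidlen : (List.ofFn (fun j : Fin k =>
      (eqvP p).symm ((eqvP p (u.1.get ⟨j.1, by rw [u.2]; exact j.2⟩)).2,
        (eqvP p (v.1.get ⟨j.1, by rw [v.2]; exact j.2⟩)).1))).length = k := by simp
  set mid : VV k p := ⟨_, hmidlen⟩ with hmid
  have hmidget : ∀ j (hj : j < k), mid.1.get ⟨j, by rw [mid.2]; exact hj⟩ =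
      (eqvP p).symm ((eqvP p (u.1.get ⟨j, by rw [u.2]; exact hj⟩)).2,
        (eqvP p (v.1.get ⟨j, by rw [v.2]; exact hj⟩)).1) := by
    intro j hj
    simp only [hmid, List.get_eq_getElem, List.getElem_ofFn]
  have r1 : Relation.ReflTransGen (fun x y => (x, y) ∈ Ecfg k p) u mid := by
    apply reach_compat hk
    intro j hj
    rw [hmidget j hj]
    simp
  have r2 : Relation.ReflTransGen (fun x y => (x, y) ∈ Ecfg k p) mid v := by
    apply reach_compat hk
    intro j hj
    rw [hmidget j hj]
    simp
  exact r1.trans r2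

lemma Ecfg_nonempty (hk : 0 < k) : (Ecfg k p).Nonempty := by
  have a0 : Fin (2 ^ p) := ⟨0, pow_pos (by norm_num) p⟩
  set z0 : Fin (4 ^ p) := (eqvP p).symm (a0, a0) with hz0
  have hlen : (List.replicate k z0).length = k := by simp
  set u0 : VV k p := ⟨List.replicate k z0, hlen⟩ with hu0
  have hhd : hdV k p u0 = z0 := by
    rw [hdV_eq hk u0]
    show (List.replicate k z0).head _ = z0
    cases k with
    | zero => omega
    | succ m => simp [List.replicate]
  refine ⟨(u0, shiftV hk u0 z0), shape_edge hk u0 z0 ?_⟩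
  rw [hhd, hz0]
  simp

lemma Ecfg_card (hk : 0 < k) : (Ecfg k p).card = (4 ^ p) ^ k * 2 ^ p := by
  have := Finset.card_eq_sum_card_fiberwise
    (f := Prod.fst) (s := Ecfg k p) (t := Finset.univ) (fun x _ => Finset.mem_univ _)
  rw [this]
  have : ∀ u : VV k p, (Finset.filter (fun x => x.1 = u) (Ecfg k p)).card = 2 ^ p := by
    intro u
    exact outdeg hk u
  rw [Finset.sum_congr rfl (fun u _ => this u), Finset.sum_const, Finset.card_univ]
  rw [card_vector, Fintype.card_fin]
  simp [mul_comm]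

end Dbj

lemma occCyc_eq_card {α : Type*} [DecidableEq α] (S w : List α) :
    occCyc S w =
      ((Finset.range S.length).filter (fun i => ((S ++ S).drop i).take w.length = w)).card := rfl

lemma occCyc_succ {α : Type*} [DecidableEq α] [Fintype α] (S w : List α)
    (h : w.length + 1 ≤ S.length) :
    occCyc S w = ∑ a : α, occCyc S (w ++ [a]) := by
  classical
  set n := S.length with hn
  have hset : (Finset.range n).filter (fun i => ((S ++ S).drop i).take w.length = w)
      = Finset.univ.biUnion (fun a : α => (Finset.range n).filter
          (fun i => ((S ++ S).drop i).take (w.length + 1) = w ++ [a])) := by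
    ext i
    simp only [Finset.mem_filter, Finset.mem_biUnion, Finset.mem_univ, true_and,
      Finset.mem_range]
    constructor
    · rintro ⟨hi, hw⟩
      have hlt : w.length < ((S ++ S).drop i).length := by
        simp only [List.length_drop, List.length_append]
        omega
      refine ⟨((S ++ S).drop i)[w.length]'hlt, hi, ?_⟩
      rw [List.take_succ, hw, List.getElem?_eq_getElem hlt]
      rfl
    · rintro ⟨a, hi, hwa⟩
      refine ⟨hi, ?_⟩
      have hlt : w.length < ((S ++ S).drop i).length := by
        simp only [List.length_drop, List.length_append]
        omega
      rw [List.take_succ, List.getElem?_eq_getElem hlt] at hwa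
      have hlen : (((S ++ S).drop i).take w.length).length = w.length := by
        simp only [List.length_take, List.length_drop, List.length_append]
        omega
      have := List.append_inj hwa (by simpa using hlen)
      exact this.1
  rw [occCyc_eq_card, hset, Finset.card_biUnion]
  · apply Finset.sum_congr rfl
    intro a _
    rw [occCyc_eq_card]
    congr 1
    apply Finset.filter_congr
    intro i _
    rw [List.length_append, List.length_singleton]
  · intro a _ b _ hab
    apply Finset.disjoint_left.mpr
    intro i hia hib
    simp only [Finset.mem_filter] at hia hib
    apply hab
    have := hia.2.symm.trans hib.2
    have := List.append_cancel_left this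
    simpa using this


/-- Generalized de Bruijn words, case `l = 0`: over the alphabet of size `σ = 4^p`
there is a string of length `σ^(k+1/2) = 2^(p(2k+1))` in which every word of length
`i < k` occurs cyclically exactly `σ^(k-i+1/2) = 2^(p(2(k-i)+1))` times, every word of
length `k` occurring in `S` occurs cyclically exactly `σ^(1/2) = 2^p` times, and no word
of length `k+1` occurs cyclically more than once. -/
theorem stmt15 (k p : ℕ) (hk : 0 < k) (hp : 1 ≤ p) :
    ∃ S : List (Fin (4 ^ p)),
      S.length = 2 ^ (p * (2 * k + 1)) ∧
      (∀ w : List (Fin (4 ^ p)), w.length < k →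
        occCyc S w = 2 ^ (p * (2 * (k - w.length) + 1))) ∧
      (∀ w : List (Fin (4 ^ p)), w.length = k → 0 < occCyc S w → occCyc S w = 2 ^ p) ∧
      (∀ w : List (Fin (4 ^ p)), w.length = k + 1 → occCyc S w ≤ 1) := by
  classical
  obtain ⟨c, hcne, hcval⟩ :=
    euler_circuit (Ecfg k p) (Ecfg_bal hk) (Ecfg_conn hk) (Ecfg_nonempty hk)
  set S : List (Fin (4 ^ p)) := c.map (fun v => hdV k p v) with hS
  have hSlen : S.length = c.length := by simp [hS]
  have hclen : c.length = (4 ^ p) ^ k * 2 ^ p := by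
    have h1 := congrArg Multiset.card hcval
    rw [Multiset.coe_card, length_cycE] at h1
    rw [h1]
    exact Ecfg_card hk
  have harith : ∀ d : ℕ, 2 ^ p * (4 ^ p) ^ d = 2 ^ (p * (2 * d + 1)) := by
    intro d
    rw [show (4 : ℕ) = 2 ^ 2 from rfl, ← pow_mul, ← pow_mul, ← pow_add]
    congr 1
    ring
  have hn2 : S.length = 2 ^ (p * (2 * k + 1)) := by
    rw [hSlen, hclen, mul_comm ((4 ^ p) ^ k) (2 ^ p), harith k]
  set n := c.length with hnn
  have hkn : k + 1 ≤ n := by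
    have h1 : 2 * k + 1 < 2 ^ (2 * k + 1) := Nat.lt_two_pow_self
    have h2 : (2:ℕ) ^ (2 * k + 1) ≤ 2 ^ (p * (2 * k + 1)) := by
      apply Nat.pow_le_pow_right (by norm_num)
      nlinarith
    have h3 : n = 2 ^ (p * (2 * k + 1)) := by rw [← hn2, hSlen]
    omega
  have hnodupE : (cycE c).Nodup := by
    have h1 := (Ecfg k p).nodup
    rw [← hcval] at h1
    exact Multiset.coe_nodup.mp h1
  have hedges : ∀ e ∈ cycE c, e ∈ Ecfg k p := by
    intro e he
    have h2 : e ∈ ((cycE c : List _) : Multiset _) := by exact_mod_cast he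
    rw [hcval] at h2
    exact h2
  have hmemE : ∀ e, e ∈ Ecfg k p → e ∈ cycE c := by
    intro e he
    have h2 : e ∈ (Ecfg k p).val := he
    rw [← hcval] at h2
    exact_mod_cast h2
  have hstep : ∀ i (hi : i < n) (hm : (i + 1) % n < n),
      (c.get ⟨i, hi⟩, c.get ⟨(i + 1) % n, hm⟩) ∈ Ecfg k p := by
    intro i hi hm
    apply hedges
    have hic : i < (cycE c).length := by rw [length_cycE]; exact hi
    have h3 := getElem_cycE c i hi hm hic
    rw [← h3]
    exact List.getElem_mem hic
  have hSget : ∀ i (hi : i < n), S.get ⟨i, by rw [hSlen]; exact hi⟩ =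
      hdV k p (c.get ⟨i, hi⟩) := by
    intro i hi
    simp [hS]
  -- window splitting
  have hsplit : ∀ i m (hi : i < n), m ≤ n →
      ((S ++ S).drop i).take (m + 1) =
        S.get ⟨i, by rw [hSlen]; exact hi⟩ ::
          ((S ++ S).drop ((i + 1) % n)).take m := by
    intro i m hi hm
    have hi2 : i < (S ++ S).length := by
      rw [List.length_append, hSlen]
      omega
    rw [List.drop_eq_getElem_cons hi2, List.take_succ_cons]
    have hgi : (S ++ S)[i]'hi2 = S.get ⟨i, by rw [hSlen]; exact hi⟩ := by
      rw [List.getElem_append_left (by rw [hSlen]; exact hi)]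
      simp
    rw [hgi]
    congr 1
    rcases Nat.lt_or_ge (i + 1) n with hlt | hge
    · rw [Nat.mod_eq_of_lt hlt]
    · have hieq : i + 1 = n := by omega
      have hiS : i + 1 = S.length := by rw [hSlen]; omega
      have hmod0 : (i + 1) % n = 0 := by rw [hieq]; exact Nat.mod_self n
      rw [hmod0, List.drop_zero, hiS, List.drop_left,
        List.take_append_of_le_length (by rw [hSlen]; omega)]
  -- windows of length ≤ k
  have hwin : ∀ m, m ≤ k → ∀ i (hi : i < n),
      ((S ++ S).drop i).take m = (c.get ⟨i, hi⟩).1.take m := by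
    intro m
    induction m with
    | zero => intro _ i hi; simp
    | succ m ih =>
      intro hmk i hi
      have hm1 : m ≤ k := by omega
      have hmn : m ≤ n := by omega
      rw [hsplit i m hi hmn]
      have hm' : (i + 1) % n < n := Nat.mod_lt _ (by omega)
      rw [ih hm1 ((i + 1) % n) hm']
      set ci := c.get ⟨i, hi⟩ with hci
      set cn := c.get ⟨(i + 1) % n, hm'⟩ with hcn
      have hedge := hstep i hi hm'
      rw [mem_Ecfg_iff] at hedge
      obtain ⟨htl, _⟩ := hedge
      have hcieq : ci.1 = hdV k p ci :: ci.1.tail := by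
        rw [hdV_eq hk ci]
        exact (List.cons_head_tail _).symm
      rw [hSget i hi]
      conv_rhs => rw [hcieq]
      rw [List.take_succ_cons]
      congr 1
      rw [htl, List.dropLast_eq_take, List.take_take]
      congr 1
      have := cn.2
      rw [this]
      omega
  -- occurrence count for words of length k
  have hocck : ∀ w : List (Fin (4 ^ p)), w.length = k → occCyc S w = 2 ^ p := by
    intro w hw
    set w' : VV k p := ⟨w, hw⟩ with hw'
    rw [occCyc_eq_card]
    have hcard : ((Finset.range S.length).filter
        (fun i => ((S ++ S).drop i).take w.length = w)).card = (outS (Ecfg k p) w').card := by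
      set dflt : VV k p × VV k p := (w', w') with hdflt
      apply Finset.card_bij (fun i _ => (cycE c).getD i dflt)
      · intro i hi
        rw [Finset.mem_filter, Finset.mem_range, hSlen] at hi
        obtain ⟨hin, hiw⟩ := hi
        have hm' : (i + 1) % n < n := Nat.mod_lt _ (by omega)
        have hic : i < (cycE c).length := by rw [length_cycE]; exact hin
        have hgd : (cycE c).getD i dflt = (cycE c).get ⟨i, hic⟩ := by
          rw [List.getD_eq_getElem _ _ hic]
          simp
        have hget : (cycE c).get ⟨i, hic⟩ = (c.get ⟨i, hin⟩, c.get ⟨(i + 1) % n, hm'⟩) := by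
          have h5 := getElem_cycE c i hin hm' hic
          simpa using h5
        rw [hw] at hiw
        have h2 : (c.get ⟨i, hin⟩).1.take k = (c.get ⟨i, hin⟩).1 :=
          List.take_of_length_le (le_of_eq (c.get ⟨i, hin⟩).2)
        have hcieq : (c.get ⟨i, hin⟩) = w' := by
          apply Subtype.ext
          calc (c.get ⟨i, hin⟩).1 = (c.get ⟨i, hin⟩).1.take k := h2.symm
            _ = ((S ++ S).drop i).take k := (hwin k le_rfl i hin).symm
            _ = w := hiw
        rw [hgd, hget]
        exact Finset.mem_filter.mpr ⟨hstep i hin hm', hcieq⟩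
      · intro i hi j hj hij
        rw [Finset.mem_filter, Finset.mem_range, hSlen] at hi hj
        have hic : i < (cycE c).length := by rw [length_cycE]; exact hi.1
        have hjc : j < (cycE c).length := by rw [length_cycE]; exact hj.1
        rw [List.getD_eq_getElem _ _ hic, List.getD_eq_getElem _ _ hjc] at hij
        have h6 := (hnodupE.get_inj_iff (i := ⟨i, hic⟩) (j := ⟨j, hjc⟩)).mp (by simpa using hij)
        simpa using h6
      · intro e he
        rw [outS, Finset.mem_filter] at he
        obtain ⟨heE, he1⟩ := he
        obtain ⟨⟨i, hlt⟩, hget⟩ := List.mem_iff_get.mp (hmemE e heE)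
        have hin : i < n := by have h12 := hlt; rw [length_cycE] at h12; exact h12
        refine ⟨i, ?_, ?_⟩
        · rw [Finset.mem_filter, Finset.mem_range, hSlen]
          refine ⟨hin, ?_⟩
          have hm' : (i + 1) % n < n := Nat.mod_lt _ (by omega)
          have h5 := getElem_cycE c i hin hm' hlt
          have hfst : (c.get ⟨i, hin⟩) = e.1 := by
            have h9 : (cycE c).get ⟨i, hlt⟩ = (c.get ⟨i, hin⟩, c.get ⟨(i + 1) % n, hm'⟩) := by
              simpa using h5
            rw [hget] at h9
            rw [h9]
          rw [hw, hwin k le_rfl i hin]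
          rw [List.take_of_length_le (le_of_eq (c.get ⟨i, hin⟩).2), hfst, he1]
        · rw [List.getD_eq_getElem _ _ hlt, ← hget]
          simp
    rw [hcard, outdeg hk w']
  -- length k+1: at most one occurrence
  have hocck1 : ∀ w : List (Fin (4 ^ p)), w.length = k + 1 → occCyc S w ≤ 1 := by
    intro w hw
    rw [occCyc_eq_card]
    apply Finset.card_le_one.mpr
    intro i hi j hj
    rw [Finset.mem_filter, Finset.mem_range, hSlen] at hi hj
    obtain ⟨hin, hiw⟩ := hi
    obtain ⟨hjn, hjw⟩ := hj
    rw [hw] at hiw hjw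
    have hmi : (i + 1) % n < n := Nat.mod_lt _ (by omega)
    have hmj : (j + 1) % n < n := Nat.mod_lt _ (by omega)
    have hdi : ((S ++ S).drop i).take (k + 1) =
        S.get ⟨i, by rw [hSlen]; exact hin⟩ :: (c.get ⟨(i + 1) % n, hmi⟩).1 := by
      rw [hsplit i k hin (by omega), hwin k le_rfl ((i + 1) % n) hmi,
        List.take_of_length_le (le_of_eq (c.get ⟨(i + 1) % n, hmi⟩).2)]
    have hdj : ((S ++ S).drop j).take (k + 1) =
        S.get ⟨j, by rw [hSlen]; exact hjn⟩ :: (c.get ⟨(j + 1) % n, hmj⟩).1 := by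
      rw [hsplit j k hjn (by omega), hwin k le_rfl ((j + 1) % n) hmj,
        List.take_of_length_le (le_of_eq (c.get ⟨(j + 1) % n, hmj⟩).2)]
    have heq : S.get ⟨i, by rw [hSlen]; exact hin⟩ :: (c.get ⟨(i + 1) % n, hmi⟩).1 =
        S.get ⟨j, by rw [hSlen]; exact hjn⟩ :: (c.get ⟨(j + 1) % n, hmj⟩).1 := by
      rw [← hdi, ← hdj, hiw, hjw]
    have hhd := List.head_eq_of_cons_eq heq
    have htl : (c.get ⟨(i + 1) % n, hmi⟩) = (c.get ⟨(j + 1) % n, hmj⟩) :=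
      Subtype.ext (List.tail_eq_of_cons_eq heq)
    have hrec : ∀ a (ha : a < n) (hma : (a + 1) % n < n),
        (c.get ⟨a, ha⟩).1 = S.get ⟨a, by rw [hSlen]; exact ha⟩ ::
          (c.get ⟨(a + 1) % n, hma⟩).1.dropLast := by
      intro a ha hma
      have hedge := hstep a ha hma
      rw [mem_Ecfg_iff] at hedge
      obtain ⟨htl', _⟩ := hedge
      rw [hSget a ha, ← htl', hdV_eq hk]
      exact (List.cons_head_tail _).symm
    have hcij : c.get ⟨i, hin⟩ = c.get ⟨j, hjn⟩ := by
      apply Subtype.ext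
      rw [hrec i hin hmi, hrec j hjn hmj, hhd, htl]
    have hic : i < (cycE c).length := by rw [length_cycE]; exact hin
    have hjc : j < (cycE c).length := by rw [length_cycE]; exact hjn
    have hgij : (cycE c).get ⟨i, hic⟩ = (cycE c).get ⟨j, hjc⟩ := by
      have h5 : (cycE c).get ⟨i, hic⟩ = (c.get ⟨i, hin⟩, c.get ⟨(i + 1) % n, hmi⟩) := by
        simpa using getElem_cycE c i hin hmi hic
      have h6 : (cycE c).get ⟨j, hjc⟩ = (c.get ⟨j, hjn⟩, c.get ⟨(j + 1) % n, hmj⟩) := by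
        simpa using getElem_cycE c j hjn hmj hjc
      rw [h5, h6, hcij, htl]
    have h7 := (hnodupE.get_inj_iff).mp hgij
    simpa using h7
  -- main count by downward induction
  have hmain : ∀ d (w : List (Fin (4 ^ p))), w.length + d = k →
      occCyc S w = 2 ^ p * (4 ^ p) ^ d := by
    intro d
    induction d with
    | zero =>
      intro w hw
      rw [hocck w (by omega)]
      ring
    | succ d ih =>
      intro w hw
      have hSn : S.length = n := hSlen
      rw [occCyc_succ S w (by omega)]
      have h8 : ∀ a : Fin (4 ^ p), occCyc S (w ++ [a]) = 2 ^ p * (4 ^ p) ^ d := by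
        intro a
        apply ih
        simp only [List.length_append, List.length_singleton]
        omega
      rw [Finset.sum_congr rfl (fun a _ => h8 a), Finset.sum_const, Finset.card_univ,
        Fintype.card_fin, smul_eq_mul]
      ring
  refine ⟨S, hn2, ?_, ?_, hocck1⟩
  · intro w hwlt
    rw [hmain (k - w.length) w (by omega), harith]
  · intro w hw _
    exact hocck w hw
end

section
/- Let S be a string of length n over alphabet of size σ satisfying: for every word w, |S|^↻_w ≤ n/σ^{|w|} if |w| ≤ k, and |S|^↻_w ≤ n/σ^{(|w|+k)/2} if k < |w| ≤ z (where z = k+l+1). Then for every parsing Y_S = y₁…y_m of S with all phrases of length at most z: m·H₀(Y_S) ≥ (n(z+k)/(2z))·log σ - m·log(n/m). -/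
open Finset

lemma len_filter_range (n : ℕ) (p : ℕ → Prop) [DecidablePred p] :
    ((List.range n).filter (fun i => decide (p i))).length = ((Finset.range n).filter p).card := by
  rw [← List.countP_eq_length_filter]
  exact Nat.count_eq_card_filter_range p n

lemma count_le_occCyc {Γ : Type*} [DecidableEq Γ] (Y : List (List Γ))
    (hne : ∀ y ∈ Y, y ≠ []) (w : List Γ) :
    Y.count w ≤ occCyc Y.flatten w := by
  classical
  set S := Y.flatten with hS
  set m := Y.length with hm
  set n := S.length with hn
  set F : ℕ → ℕ := fun j => ((Y.take j).flatten).length with hF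
  have hmono : ∀ i j, i ≤ j → F i ≤ F j := by
    intro i j hij
    have h1 : Y.take j = Y.take i ++ (Y.take j).drop i := by
      conv_lhs => rw [← List.take_append_drop i (Y.take j)]
      rw [List.take_take, min_eq_left hij]
    simp only [hF]
    rw [h1, List.flatten_append, List.length_append]
    omega
  have hstep : ∀ j, j < m → F j < F (j + 1) := by
    intro j hj
    have hj' : j < Y.length := hj
    have h1 : Y.take (j + 1) = Y.take j ++ [Y[j]] := (List.take_concat_get' Y j hj').symm
    have h2 : Y[j] ≠ [] := hne _ (List.getElem_mem hj')
    have h3 : 0 < Y[j].length := List.length_pos_iff.mpr h2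
    simp only [hF]
    rw [h1, List.flatten_append, List.length_append]
    simp
    omega
  have hstrict : ∀ i j, i < j → j ≤ m → F i < F j :=
    fun i j hij hjm => lt_of_lt_of_le (hstep i (lt_of_lt_of_le hij hjm)) (hmono _ _ hij)
  have hFm : F m = n := by
    simp only [hF, hm]
    rw [List.take_length]
  -- count as a Finset card
  have hcount : Y.count w = ((Finset.range m).filter (fun j => Y.getD j [] = w)).card := by
    have hmap : (List.range m).map (fun j => Y.getD j []) = Y := by
      apply List.ext_getElem
      · simp [hm]
      · intro i h1 h2
        simp [List.getElem?_eq_getElem h2]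
    calc Y.count w = ((List.range m).map (fun j => Y.getD j [])).count w := by rw [hmap]
    _ = (List.range m).countP (fun j => Y.getD j [] == w) := by
        rw [List.count, List.countP_map]; rfl
    _ = (List.range m).countP (fun j => decide (Y.getD j [] = w)) := by
        apply List.countP_congr; intro j _; simp
    _ = ((Finset.range m).filter (fun j => Y.getD j [] = w)).card := by
        rw [List.countP_eq_length_filter]; exact len_filter_range m _
  have hocc : occCyc S w
      = ((Finset.range n).filter (fun i => ((S ++ S).drop i).take w.length = w)).card := by
    rw [occCyc]; exact len_filter_range n _
  rw [hcount, hocc]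
  apply Finset.card_le_card_of_injOn F
  · intro j hj
    simp only [Finset.mem_coe, Finset.mem_filter, Finset.mem_range] at hj ⊢
    obtain ⟨hjm, hjw⟩ := hj
    have hgw : Y[j] = w := by
      rwa [List.getD_eq_getElem?_getD, List.getElem?_eq_getElem hjm, Option.getD_some] at hjw
    constructor
    · calc F j < F m := hstrict j m hjm le_rfl
      _ = n := hFm
    · have hdrop : S.drop (F j) = (Y.drop j).flatten := by
        conv_lhs => rw [hS, ← List.take_append_drop j Y, List.flatten_append]
        exact List.drop_left
      have hdj : Y.drop j = w :: Y.drop (j + 1) := by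
        rw [List.drop_eq_getElem_cons hjm, hgw]
      have hFle : F j ≤ n := le_of_lt (lt_of_lt_of_le (hstrict j m hjm le_rfl) hFm.le)
      rw [List.drop_append_of_le_length hFle, hdrop, hdj]
      simp only [List.flatten_cons]
      rw [List.append_assoc, List.take_append_of_le_length le_rfl, List.take_length]
  · intro i hi j hj hij
    simp only [Finset.coe_filter, Set.mem_setOf_eq, Finset.mem_range] at hi hj
    by_contra hne'
    rcases lt_or_gt_of_ne hne' with h | h
    · exact absurd hij (Nat.ne_of_lt (hstrict i j h hj.1.le))
    · exact absurd hij.symm (Nat.ne_of_lt (hstrict j i h hi.1.le))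

lemma countBEq_eq {Γ : Type*} [DecidableEq Γ] (w : List Γ) (Y : List (List Γ)) :
    @List.count (List Γ) instBEqOfDecidableEq w Y = Y.count w := by
  apply List.countP_congr
  intro b _
  rw [Bool.eq_iff_iff]
  simp


theorem stmt16 {Γ : Type*} [Fintype Γ] [DecidableEq Γ] (S : List Γ) (k l σ n : ℕ)
    (hσ : σ = Fintype.card Γ) (hn : n = S.length)
    (hsmall : ∀ w : List Γ, w.length ≤ k →
      (occCyc S w : ℝ) ≤ (n : ℝ) / (σ : ℝ) ^ w.length)
    (hbig : ∀ w : List Γ, k < w.length → w.length ≤ k + l + 1 →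
      (occCyc S w : ℝ) ≤ (n : ℝ) / (σ : ℝ) ^ (((w.length : ℝ) + k) / 2))
    (Y : List (List Γ)) (hY : Y.flatten = S) (hne : ∀ y ∈ Y, y ≠ [])
    (hlen : ∀ y ∈ Y, y.length ≤ k + l + 1) :
    (n : ℝ) * ((k + l + 1 : ℝ) + k) / (2 * (k + l + 1 : ℝ)) * Real.logb 2 σ -
        (Y.length : ℝ) * Real.logb 2 ((n : ℝ) / (Y.length : ℝ)) ≤
      nH0 Y := by
  classical
  by_cases hYnil : Y = []
  · have hS : S = [] := by rw [← hY, hYnil]; rfl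
    subst hYnil
    rw [hS] at hn
    simp [nH0, hn]
  -- nonempty case
  set z : ℝ := (k : ℝ) + l + 1 with hz
  have hz1 : (1 : ℝ) ≤ z := by
    rw [hz]
    have h1 : (0:ℝ) ≤ (k:ℝ) := Nat.cast_nonneg k
    have h2 : (0:ℝ) ≤ (l:ℝ) := Nat.cast_nonneg l
    linarith
  have hz0 : (0 : ℝ) < z := by linarith
  set C : ℝ := (z + k) / (2 * z) * Real.logb 2 σ with hC
  set T := Y.toFinset with hT
  set m := Y.length with hm
  -- basic positivity
  obtain ⟨y0, hy0⟩ := List.exists_mem_of_ne_nil Y hYnil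
  obtain ⟨a0, ha0⟩ := List.exists_mem_of_ne_nil y0 (hne y0 hy0)
  have hΓ : Nonempty Γ := ⟨a0⟩
  have hσ1 : 1 ≤ σ := by rw [hσ]; exact Fintype.card_pos
  have hσR : (1 : ℝ) ≤ (σ : ℝ) := by exact_mod_cast hσ1
  have hσ0 : (0 : ℝ) < (σ : ℝ) := by linarith
  have hlogσ : 0 ≤ Real.logb 2 σ := Real.logb_nonneg one_lt_two hσR
  have hm0 : 0 < m := List.length_pos_iff.mpr hYnil
  have hmR : (0 : ℝ) < (m : ℝ) := by exact_mod_cast hm0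
  have hn0 : 0 < n := by
    rw [hn, ← hY]
    have := List.sublist_flatten_of_mem hy0
    have := this.length_le
    have := List.length_pos_iff.mpr (hne y0 hy0)
    omega
  have hnR : (0 : ℝ) < (n : ℝ) := by exact_mod_cast hn0
  have hc0 : ∀ w ∈ T, 0 < Y.count w := fun w hw =>
    List.count_pos_iff.mpr (List.mem_toFinset.mp hw)
  have hcR : ∀ w ∈ T, (0 : ℝ) < (Y.count w : ℝ) := fun w hw => by exact_mod_cast hc0 w hw
  -- sums of counts
  have hsum_c : ∑ w ∈ T, (Y.count w : ℝ) = (m : ℝ) := by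
    rw [hm, ← List.sum_toFinset_count_eq_length Y]
    push_cast
    exact Finset.sum_congr hT (fun w _ => by rw [countBEq_eq])
  have hsum_len : ∑ w ∈ T, (Y.count w : ℝ) * (w.length : ℝ) = (n : ℝ) := by
    have h1 : (Y.map List.length).sum = ∑ w ∈ T, Y.count w • w.length := by
      rw [Finset.sum_list_map_count Y List.length]
      exact Finset.sum_congr rfl fun w _ => by rw [countBEq_eq]
    have h2 : (Y.map List.length).sum = n := by rw [← List.length_flatten, hY, hn]
    rw [← h2, h1]
    push_cast [smul_eq_mul]
    rfl
  -- key per-phrase bound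
  have key : ∀ w ∈ T, (w.length : ℝ) * C ≤ Real.logb 2 ((n : ℝ) / (Y.count w : ℝ)) := by
    intro w hw
    have hwY : w ∈ Y := List.mem_toFinset.mp hw
    have hwne : w ≠ [] := hne w hwY
    have hw1 : 1 ≤ w.length := List.length_pos_iff.mpr hwne
    have hwz : (w.length : ℝ) ≤ z := by
      have := hlen w hwY
      rw [hz]; exact_mod_cast this
    -- an exponent e with count ≤ n / σ^e and |w|*(z+k)/(2z) ≤ e
    obtain ⟨e, hcnt, he⟩ :
        ∃ e : ℝ, (Y.count w : ℝ) ≤ (n : ℝ) / (σ : ℝ) ^ e ∧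
          (w.length : ℝ) * ((z + k) / (2 * z)) ≤ e := by
      have hco : (Y.count w : ℝ) ≤ (occCyc S w : ℝ) := by
        exact_mod_cast hY ▸ count_le_occCyc Y hne w
      by_cases hk : w.length ≤ k
      · refine ⟨(w.length : ℝ), ?_, ?_⟩
        · have := hsmall w hk
          rw [← Real.rpow_natCast (σ : ℝ) w.length] at this
          linarith
        · have h1 : (z + k) / (2 * z) ≤ 1 := by
            rw [div_le_one (by linarith)]
            have : (k : ℝ) ≤ z := by rw [hz]; push_cast; linarith
            linarith
          nlinarith [Nat.cast_nonneg (α := ℝ) w.length]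
      · push_neg at hk
        refine ⟨((w.length : ℝ) + k) / 2, ?_, ?_⟩
        · have := hbig w hk (hlen w hwY)
          linarith
        · rw [mul_div_assoc', div_le_div_iff₀ (by linarith) two_pos]
          nlinarith [hwz, Nat.cast_nonneg (α := ℝ) k, Nat.cast_nonneg (α := ℝ) w.length, hz0]
    have hpow : (0 : ℝ) < (σ : ℝ) ^ e := Real.rpow_pos_of_pos hσ0 e
    have hdiv : (σ : ℝ) ^ e ≤ (n : ℝ) / (Y.count w : ℝ) := by
      rw [le_div_iff₀ (hcR w hw)]
      calc (σ : ℝ) ^ e * (Y.count w : ℝ) ≤ (σ : ℝ) ^ e * ((n : ℝ) / (σ : ℝ) ^ e) := by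
            exact mul_le_mul_of_nonneg_left hcnt hpow.le
      _ = n := by field_simp
    have hlog1 : Real.logb 2 ((σ : ℝ) ^ e) ≤ Real.logb 2 ((n : ℝ) / (Y.count w : ℝ)) :=
      Real.logb_le_logb_of_le one_lt_two hpow hdiv
    have hlog2 : Real.logb 2 ((σ : ℝ) ^ e) = e * Real.logb 2 σ := by
      rw [Real.logb, Real.log_rpow hσ0, Real.logb, mul_div_assoc]
    have : (w.length : ℝ) * C ≤ e * Real.logb 2 σ := by
      rw [hC, ← mul_assoc]
      exact mul_le_mul_of_nonneg_right he hlogσ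
    linarith
  -- entropy algebra
  have e_nH0 : nH0 Y = (m : ℝ) * Real.logb 2 m - ∑ w ∈ T, (Y.count w : ℝ) * Real.logb 2 (Y.count w : ℝ) := by
    rw [nH0]
    simp only [countBEq_eq, ← hT, ← hm]
    have : ∀ w ∈ T, (Y.count w : ℝ) * Real.logb 2 ((Y.count w : ℝ) / (m : ℝ))
        = (Y.count w : ℝ) * Real.logb 2 (Y.count w : ℝ) - (Y.count w : ℝ) * Real.logb 2 (m : ℝ) := by
      intro w hw
      rw [Real.logb_div (ne_of_gt (hcR w hw)) (ne_of_gt hmR)]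
      ring
    rw [Finset.sum_congr rfl this, Finset.sum_sub_distrib, ← Finset.sum_mul, hsum_c]
    ring
  have key2 : (n : ℝ) * C ≤ ∑ w ∈ T, (Y.count w : ℝ) * Real.logb 2 ((n : ℝ) / (Y.count w : ℝ)) := by
    calc (n : ℝ) * C = ∑ w ∈ T, (Y.count w : ℝ) * (w.length : ℝ) * C := by
          rw [← Finset.sum_mul, hsum_len]
    _ ≤ _ := by
        apply Finset.sum_le_sum
        intro w hw
        rw [mul_assoc]
        exact mul_le_mul_of_nonneg_left (key w hw) (hcR w hw).le
  have e_ub : ∑ w ∈ T, (Y.count w : ℝ) * Real.logb 2 ((n : ℝ) / (Y.count w : ℝ))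
      = (m : ℝ) * Real.logb 2 n - ∑ w ∈ T, (Y.count w : ℝ) * Real.logb 2 (Y.count w : ℝ) := by
    have : ∀ w ∈ T, (Y.count w : ℝ) * Real.logb 2 ((n : ℝ) / (Y.count w : ℝ))
        = (Y.count w : ℝ) * Real.logb 2 (n : ℝ) - (Y.count w : ℝ) * Real.logb 2 (Y.count w : ℝ) := by
      intro w hw
      rw [Real.logb_div (ne_of_gt hnR) (ne_of_gt (hcR w hw))]
      ring
    rw [Finset.sum_congr rfl this, Finset.sum_sub_distrib, ← Finset.sum_mul, hsum_c]
  have e_goalm : Real.logb 2 ((n : ℝ) / (m : ℝ)) = Real.logb 2 n - Real.logb 2 m :=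
    Real.logb_div (ne_of_gt hnR) (ne_of_gt hmR)
  have hgoal_eq : (n : ℝ) * ((k + l + 1 : ℝ) + k) / (2 * (k + l + 1 : ℝ)) * Real.logb 2 σ
      = (n : ℝ) * C := by rw [hC, hz]; ring
  rw [hgoal_eq, e_nH0, e_goalm]
  rw [e_ub] at key2
  linarith
end

section
/- Let (S', G) be a weakly non-redundant full grammar generating S (obtained from S by a sequence of replacements, each replacing k ≥ 2 non-overlapping occurrences of a word w of length ≥ 2 in the current starting string by a fresh nonterminal). Let Γ be the original alphabet, N the set of nonterminals, and S_G the concatenation of the final starting string S' with all right-hand sides of G. Then |S'|_Γ + 2·|S_G|_N ≤ |S|, where |w|_A counts occurrences in w of symbols from A. -/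
/-- Number of occurrences of original letters in a string over terminals ⊕ nonterminals. -/
def countLetters {Γ : Type*} (w : List (Γ ⊕ ℕ)) : ℕ :=
  (w.filter Sum.isLeft).length

/-- Number of occurrences of nonterminals in a string over terminals ⊕ nonterminals. -/
def countNonterminals {Γ : Type*} (w : List (Γ ⊕ ℕ)) : ℕ :=
  (w.filter Sum.isRight).length

lemma cnt_append {α : Type*} (q : α → Bool) (a b : List α) :
    ((a ++ b).filter q).length = (a.filter q).length + (b.filter q).length := by
  simp [List.filter_append]

lemma cnt_intersperse {α : Type*} (q : α → Bool) (sep : List α) :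
    ∀ parts : List (List α),
    (((List.intersperse sep parts).flatten).filter q).length
      = (parts.map (fun l => (l.filter q).length)).sum
        + (parts.length - 1) * (sep.filter q).length
  | [] => by simp
  | [a] => by simp
  | a :: b :: rest => by
    have ih := cnt_intersperse q sep (b :: rest)
    rw [List.intersperse_cons_cons]
    simp only [List.flatten_cons, cnt_append, List.map_cons, List.sum_cons] at ih ⊢
    rw [ih]
    simp only [List.length_cons]
    rw [Nat.add_sub_cancel, Nat.add_sub_cancel]
    ring

lemma cnt_left_right {Γ : Type*} (l : List (Γ ⊕ ℕ)) :
    countLetters l + countNonterminals l = l.length := by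
  induction l with
  | nil => simp [countLetters, countNonterminals]
  | cons x xs ih =>
    cases x <;> simp [countLetters, countNonterminals, List.filter_cons] at ih ⊢ <;> omega

/-- For a weakly non-redundant grammar obtained from `S` by a sequence of `T`
replacements (step `t` replaces `k ≥ 2` non-overlapping occurrences of a word `w t`
of length `≥ 2` in the current starting string by the fresh nonterminal `t`),
letting `S' = str T` be the final starting string and `S_G` the concatenation of `S'`
with all right-hand sides, we have `|S'|_Γ + 2|S_G|_N ≤ |S|`. -/
theorem stmt18 {Γ : Type*} (S : List Γ) (T : ℕ) (str : ℕ → List (Γ ⊕ ℕ))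
    (w : ℕ → List (Γ ⊕ ℕ))
    (h0 : str 0 = S.map Sum.inl)
    (hstep : ∀ t < T,
      2 ≤ (w t).length ∧
      Sum.inr t ∉ str t ∧
      ∃ parts : List (List (Γ ⊕ ℕ)), 3 ≤ parts.length ∧
        str t = (List.intersperse (w t) parts).flatten ∧
        str (t + 1) = (List.intersperse [Sum.inr t] parts).flatten)
    (S' SG : List (Γ ⊕ ℕ))
    (hS' : S' = str T)
    (hSG : SG = S' ++ (List.range T).flatMap w) :
    countLetters S' + 2 * countNonterminals SG ≤ S.length := by
  subst hS' hSG
  -- strengthen to an invariant over t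
  suffices h : ∀ t ≤ T, countLetters (str t) + 2 * countNonterminals (str t)
      + 2 * countNonterminals ((List.range t).flatMap w) ≤ S.length by
    have := h T le_rfl
    unfold countNonterminals at *
    rw [cnt_append]
    omega
  intro t ht
  induction t with
  | zero =>
    simp [h0, countLetters, countNonterminals, List.filter_map, Function.comp_def]
  | succ t ih =>
    have ht' : t < T := ht
    have ihv := ih (le_of_lt ht')
    obtain ⟨hw2, -, parts, hp3, hstr, hstr'⟩ := hstep t ht'
    set a := (parts.map (fun l => (l.filter (Sum.isLeft : Γ ⊕ ℕ → Bool)).length)).sum with ha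
    set b := (parts.map (fun l => (l.filter (Sum.isRight : Γ ⊕ ℕ → Bool)).length)).sum with hb
    set k := parts.length - 1 with hk
    have hk2 : 2 ≤ k := by omega
    have hLt : countLetters (str t) = a + k * countLetters (w t) := by
      rw [countLetters, hstr, cnt_intersperse]; rfl
    have hNt : countNonterminals (str t) = b + k * countNonterminals (w t) := by
      rw [countNonterminals, hstr, cnt_intersperse]; rfl
    have hLt' : countLetters (str (t+1)) = a := by
      rw [countLetters, hstr', cnt_intersperse]; simp [ha]
    have hNt' : countNonterminals (str (t+1)) = b + k := by
      rw [countNonterminals, hstr', cnt_intersperse]; simp [hb, hk, List.filter_cons]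
    have hrange : (List.range (t+1)).flatMap w = (List.range t).flatMap w ++ w t := by
      rw [List.range_succ]; simp
    have hNrange : countNonterminals ((List.range (t+1)).flatMap w)
        = countNonterminals ((List.range t).flatMap w) + countNonterminals (w t) := by
      rw [hrange, countNonterminals, cnt_append]; rfl
    have hsum := cnt_left_right (w t)
    set l := countLetters (w t)
    set n := countNonterminals (w t)
    have key : 2 * k + 2 * n ≤ k * l + 2 * (k * n) := by
      have h1 : 2 * k ≤ k * (l + n) := by
        calc 2 * k = k * 2 := by ring
        _ ≤ k * (l + n) := Nat.mul_le_mul_left k (by omega)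
      have h2 : 2 * n ≤ k * n := Nat.mul_le_mul_right n hk2
      nlinarith [h1, h2]
    rw [hLt', hNt', hNrange]
    rw [hLt, hNt] at ihv
    omega
end
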